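/- Let λ/μ be an edgewise connected skew diagram with d diagonals. Then the map sending an outside decomposition Π of λ/μ to its cutting strip φ(Π) is a bijection between the set of outside decompositions of λ/μ and the set of border strips with d boxes (considered up to translation). -/

import Mathlib

noncomputable section

/-- A box in the plane: `(row, column)`, rows increasing downward (English notation). -/
abbrev Box : Type := ℤ × ℤ

/-- The content of a box `(i, j)` is `j - i`. -/
def boxContent (b : Box) : ℤ := b.2 - b.1

/-- An integer partition, indexed from `1` (the value `part 0` is irrelevant). -/
structure Partition' where
  part : ℕ → ℕ
  antitone : ∀ ⦃i j : ℕ⦄, i ≤ j → part j ≤ part i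
  eventually_zero : ∃ N : ℕ, ∀ i : ℕ, N ≤ i → part i = 0

/-- The skew diagram `λ/μ`: boxes `(i, j)` with `i ≥ 1` and `μ_i < j ≤ λ_i`. -/
def skewCells (lam mu : Partition') : Set Box :=
  {b : Box | 1 ≤ b.1 ∧ (mu.part b.1.toNat : ℤ) < b.2 ∧ b.2 ≤ (lam.part b.1.toNat : ℤ)}

/-- `D` is the set of boxes of a skew diagram `λ/μ` for some partitions `μ ⊆ λ`. -/
def IsSkewShape (D : Set Box) : Prop :=
  ∃ lam mu : Partition', (∀ i, mu.part i ≤ lam.part i) ∧ D = skewCells lam mu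

/-- Translate a set of boxes by a vector `v`. -/
def boxTranslate (v : Box) (D : Set Box) : Set Box := (fun b => b + v) '' D

/-- `D` is a translate of a skew diagram. -/
def IsSkewLike (D : Set Box) : Prop := ∃ v : Box, IsSkewShape (boxTranslate v D)

/-- Two boxes share a common edge. -/
def boxAdj (a b : Box) : Prop :=
  (a.1 = b.1 ∧ (a.2 = b.2 + 1 ∨ b.2 = a.2 + 1)) ∨
  (a.2 = b.2 ∧ (a.1 = b.1 + 1 ∨ b.1 = a.1 + 1))

/-- Any two boxes of `D` are joined by a path of boxes of `D` in which consecutive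
boxes share a common edge. -/
def EdgewiseConnected (D : Set Box) : Prop :=
  ∀ a ∈ D, ∀ b ∈ D, Relation.ReflTransGen (fun x y => x ∈ D ∧ y ∈ D ∧ boxAdj x y) a b

/-- `D` contains no `2 × 2` block of boxes. -/
def NoTwoByTwo (D : Set Box) : Prop :=
  ∀ b : Box, ¬(b ∈ D ∧ (b.1, b.2 + 1) ∈ D ∧ (b.1 + 1, b.2) ∈ D ∧ (b.1 + 1, b.2 + 1) ∈ D)

/-- A border strip (ribbon): a nonempty edgewise connected skew diagram (up to translation)
containing no `2 × 2` block of boxes. -/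
def IsBorderStrip (B : Set Box) : Prop :=
  B.Nonempty ∧ IsSkewLike B ∧ EdgewiseConnected B ∧ NoTwoByTwo B

/-- `b` is the starting box (lower-left end) of `B`: no box of `B` directly to its left
nor directly below it. -/
def IsStartBox (B : Set Box) (b : Box) : Prop :=
  b ∈ B ∧ (b.1, b.2 - 1) ∉ B ∧ (b.1 + 1, b.2) ∉ B

/-- `b` is the ending box (upper-right end) of `B`: no box of `B` directly above it
nor directly to its right. -/
def IsEndBox (B : Set Box) (b : Box) : Prop :=
  b ∈ B ∧ (b.1 - 1, b.2) ∉ B ∧ (b.1, b.2 + 1) ∉ B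

/-- The strip `B` has starting box of content `p` and ending box of content `q`. -/
def HasPQ (B : Set Box) (p q : ℤ) : Prop :=
  (∃ b : Box, IsStartBox B b ∧ boxContent b = p) ∧
  (∃ b : Box, IsEndBox B b ∧ boxContent b = q)

/-- An outside decomposition of `D`: a partition of the boxes of `D` into pairwise disjoint
border strips, each strip having its starting box on the left or bottom perimeter of `D` and
its ending box on the right or top perimeter of `D`. -/
def IsOutsideDecomposition (D : Set Box) (P : Set (Set Box)) : Prop :=
  (∀ θ ∈ P, IsBorderStrip θ ∧ θ ⊆ D) ∧
  (∀ b ∈ D, ∃! θ : Set Box, θ ∈ P ∧ b ∈ θ) ∧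
  (∀ θ ∈ P, ∀ b : Box, IsStartBox θ b → ((b.1, b.2 - 1) ∉ D ∨ (b.1 + 1, b.2) ∉ D)) ∧
  (∀ θ ∈ P, ∀ b : Box, IsEndBox θ b → ((b.1 - 1, b.2) ∉ D ∨ (b.1, b.2 + 1) ∉ D))

/-- The box `b` of `D` goes up in the outside decomposition `P`: in the strip of `P`
containing it, the next box is directly above it; an ending box goes up when no box of `D`
lies directly above it. -/
def GoesUp (D : Set Box) (P : Set (Set Box)) (b : Box) : Prop :=
  ∃ θ ∈ P, b ∈ θ ∧ ((b.1 - 1, b.2) ∈ θ ∨ (IsEndBox θ b ∧ (b.1 - 1, b.2) ∉ D))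

/-- The box `b` of `D` goes right in the outside decomposition `P`: in the strip of `P`
containing it, the next box is directly to its right; an ending box goes right when some box
of `D` lies directly above it. -/
def GoesRight (D : Set Box) (P : Set (Set Box)) (b : Box) : Prop :=
  ∃ θ ∈ P, b ∈ θ ∧ ((b.1, b.2 + 1) ∈ θ ∨ (IsEndBox θ b ∧ (b.1 - 1, b.2) ∈ D))

/-- `T` is a cutting strip of the outside decomposition `P` of `D`: a border strip whose
boxes are labeled by the contents of `D` (each content appearing once), in which the box
labeled `c` goes up or goes right according as the boxes of the diagonal of content `c`
of `D` go up or go right in `P`. -/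
def IsCuttingStripOf (D : Set Box) (P : Set (Set Box)) (T : Set Box) : Prop :=
  IsBorderStrip T ∧ boxContent '' T = boxContent '' D ∧
  ∀ b ∈ T, ∀ c ∈ D, boxContent c = boxContent b →
    (((b.1 - 1, b.2) ∈ T → GoesUp D P c) ∧ ((b.1, b.2 + 1) ∈ T → GoesRight D P c))

/-- The segment `φ[p, q]` of a strip `T`: its boxes of content between `p` and `q`. -/
def stripSegment (T : Set Box) (p q : ℤ) : Set Box :=
  {b ∈ T | p ≤ boxContent b ∧ boxContent b ≤ q}

/-- The box of content `c` of the strip `T` goes up (the next box is directly above it). -/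
def StripGoesUpAt (T : Set Box) (c : ℤ) : Prop :=
  ∃ b ∈ T, boxContent b = c ∧ (b.1 - 1, b.2) ∈ T

/-- The box of content `c` of the strip `T` goes right (the next box is directly right of it). -/
def StripGoesRightAt (T : Set Box) (c : ℤ) : Prop :=
  ∃ b ∈ T, boxContent b = c ∧ (b.1, b.2 + 1) ∈ T

/-- `T'` is obtained from the strip `T` by reversing the direction (up versus right) of the
box labeled `i`, keeping the directions of all other boxes. -/
def IsTwist (i : ℤ) (T T' : Set Box) : Prop :=
  boxContent '' T' = boxContent '' T ∧
  (∀ c : ℤ, c ≠ i → (StripGoesUpAt T c ↔ StripGoesUpAt T' c)) ∧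
  (StripGoesUpAt T i ↔ StripGoesRightAt T' i)

/-- The inversion number of an outside decomposition: the number of ordered pairs of
strips `(θ₁, θ₂)` with `p(θ₁) > p(θ₂)` and `q(θ₁) < q(θ₂)`. -/
def invOD (P : Set (Set Box)) : ℕ :=
  {θθ : Set Box × Set Box | θθ.1 ∈ P ∧ θθ.2 ∈ P ∧
    ∃ p₁ q₁ p₂ q₂ : ℤ, HasPQ θθ.1 p₁ q₁ ∧ HasPQ θθ.2 p₂ q₂ ∧ p₂ < p₁ ∧ q₁ < q₂}.ncard

/-- A semistandard Young tableau of shape `D`: entries (variable indices) weakly increase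
along rows and strictly increase down columns; entries outside `D` are normalized to `0`. -/
def IsSSYT (D : Set Box) (T : Box → ℕ) : Prop :=
  (∀ b ∈ D, (b.1, b.2 + 1) ∈ D → T b ≤ T (b.1, b.2 + 1)) ∧
  (∀ b ∈ D, (b.1 + 1, b.2) ∈ D → T b < T (b.1 + 1, b.2)) ∧
  (∀ b : Box, b ∉ D → T b = 0)

/-- The skew Schur function of a skew diagram `D`, as a formal power series in the
variables `x_n` (`n : ℕ`): the coefficient of a monomial `μ` is the number of semistandard
Young tableaux of shape `D` using each variable `n` exactly `μ n` times. -/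
def schur (D : Set Box) : MvPowerSeries ℕ ℤ :=
  fun μ => ({T : Box → ℕ | IsSSYT D T ∧ ∀ n : ℕ, μ n = {b ∈ D | T b = n}.ncard}.ncard : ℤ)

/-- `b` is the upper-right corner box of `D`: the rightmost box of the top row. -/
def IsUpperRightCorner (D : Set Box) (b : Box) : Prop :=
  b ∈ D ∧ (∀ c ∈ D, b.1 ≤ c.1) ∧ ∀ c ∈ D, c.1 = b.1 → c.2 ≤ b.2

/-- `b` is the lower-left corner box of `D`: the leftmost box of the bottom row. -/
def IsLowerLeftCorner (D : Set Box) (b : Box) : Prop :=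
  b ∈ D ∧ (∀ c ∈ D, c.1 ≤ b.1) ∧ ∀ c ∈ D, c.1 = b.1 → b.2 ≤ c.2

/-- The block (edgewise connected component) of `D` containing the box `a`. -/
def blockOf (D : Set Box) (a : Box) : Set Box :=
  {b : Box | Relation.ReflTransGen (fun x y => x ∈ D ∧ y ∈ D ∧ boxAdj x y) a b}

/-- The complete homogeneous symmetric function `h_r` (`h_0 = 1`, `h_r = 0` for `r < 0`):
the sum of all monomials of degree `r`. -/
def hSym (r : ℤ) : MvPowerSeries ℕ ℤ :=
  fun μ => if ((μ.sum fun _ e => e : ℕ) : ℤ) = r then 1 else 0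

/-- The elementary symmetric function `e_r` (`e_0 = 1`, `e_r = 0` for `r < 0`):
the sum of all squarefree monomials of degree `r`. -/
def eSym (r : ℤ) : MvPowerSeries ℕ ℤ :=
  fun μ => if (∀ n ∈ μ.support, μ n = 1) ∧ ((μ.sum fun _ e => e : ℕ) : ℤ) = r then 1 else 0

/-- The `j`-th part (`j ≥ 1`) of the conjugate partition: the number of indices `i ≥ 1`
with `λ_i ≥ j`. -/
def conjPart (lam : Partition') (j : ℕ) : ℕ := {i : ℕ | 1 ≤ i ∧ j ≤ lam.part i}.ncard

/-- The order on the supersymmetric alphabet `x_0 < x_1 < ⋯ < y_0 < y_1 < ⋯`,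
with `Sum.inl n` representing `x_n` and `Sum.inr n` representing `y_n`. -/
def entryLE : ℕ ⊕ ℕ → ℕ ⊕ ℕ → Prop
  | Sum.inl a, Sum.inl b => a ≤ b
  | Sum.inl _, Sum.inr _ => True
  | Sum.inr _, Sum.inl _ => False
  | Sum.inr a, Sum.inr b => a ≤ b

/-- A super tableau of shape `D`: rows and columns weakly increase, the `x`-symbols
strictly increase down columns, the `y`-symbols strictly increase along rows; entries
outside `D` are normalized to `Sum.inl 0`. -/
def IsSuperSSYT (D : Set Box) (T : Box → ℕ ⊕ ℕ) : Prop :=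
  (∀ b ∈ D, (b.1, b.2 + 1) ∈ D → entryLE (T b) (T (b.1, b.2 + 1))) ∧
  (∀ b ∈ D, (b.1 + 1, b.2) ∈ D → entryLE (T b) (T (b.1 + 1, b.2))) ∧
  (∀ b ∈ D, (b.1 + 1, b.2) ∈ D →
    ∀ a c : ℕ, T b = Sum.inl a → T (b.1 + 1, b.2) = Sum.inl c → a < c) ∧
  (∀ b ∈ D, (b.1, b.2 + 1) ∈ D →
    ∀ a c : ℕ, T b = Sum.inr a → T (b.1, b.2 + 1) = Sum.inr c → a < c) ∧
  (∀ b : Box, b ∉ D → T b = Sum.inl 0)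

/-- The supersymmetric skew Schur function `s_D(X, Y)`, as a formal power series in the
variables `x_n, y_n`: the coefficient of a monomial `μ` is the number of super tableaux
of shape `D` using each symbol `v` exactly `μ v` times. -/
def superSchur (D : Set Box) : MvPowerSeries (ℕ ⊕ ℕ) ℤ :=
  fun μ =>
    ({T : Box → ℕ ⊕ ℕ | IsSuperSSYT D T ∧
        ∀ v : ℕ ⊕ ℕ, μ v = {b ∈ D | T b = v}.ncard}.ncard : ℤ)

namespace CSAux
open Classical

/-! ### Basic translation and content lemmas -/

lemma mem_boxTranslate {v : Box} {D : Set Box} {b : Box} :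
    b ∈ boxTranslate v D ↔ (b.1 - v.1, b.2 - v.2) ∈ D := by
  constructor
  · rintro ⟨a, ha, rfl⟩
    simpa [Prod.fst_add, Prod.snd_add] using ha
  · intro h
    refine ⟨(b.1 - v.1, b.2 - v.2), h, ?_⟩
    simp [Prod.ext_iff, Prod.fst_add, Prod.snd_add]

lemma mem_boxTranslate' {v : Box} {D : Set Box} {b : Box} (hb : b ∈ D) :
    (b.1 + v.1, b.2 + v.2) ∈ boxTranslate v D := by
  rw [mem_boxTranslate]
  simpa using hb

lemma boxTranslate_comp (v w : Box) (D : Set Box) :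
    boxTranslate v (boxTranslate w D) = boxTranslate (w + v) D := by
  ext b
  simp only [mem_boxTranslate, Prod.fst_add, Prod.snd_add]
  constructor <;> intro h <;> convert h using 2 <;> ring

lemma content_translate (v b : Box) :
    boxContent (b.1 + v.1, b.2 + v.2) = boxContent b + (v.2 - v.1) := by
  simp [boxContent]; ring

lemma boxAdj_symm {a b : Box} (h : boxAdj a b) : boxAdj b a := by
  rcases h with ⟨h1, h2⟩ | ⟨h1, h2⟩ <;> simp [boxAdj] <;> omega

lemma boxAdj_translate {v a b : Box} (h : boxAdj a b) :
    boxAdj (a.1 + v.1, a.2 + v.2) (b.1 + v.1, b.2 + v.2) := by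
  rcases h with ⟨h1, h2 | h2⟩ | ⟨h1, h2 | h2⟩ <;> simp [boxAdj] <;> omega

lemma noTwoByTwo_translate {v : Box} {D : Set Box} (h : NoTwoByTwo D) :
    NoTwoByTwo (boxTranslate v D) := by
  intro b hb
  simp only [mem_boxTranslate] at hb
  refine h (b.1 - v.1, b.2 - v.2) ?_
  refine ⟨hb.1, ?_, ?_, ?_⟩
  · convert hb.2.1 using 2 <;> ring
  · convert hb.2.2.1 using 2 <;> ring
  · convert hb.2.2.2 using 2 <;> ring

lemma edgewise_translate {v : Box} {D : Set Box} (h : EdgewiseConnected D) :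
    EdgewiseConnected (boxTranslate v D) := by
  rintro a ha b hb
  rw [mem_boxTranslate] at ha hb
  have := h _ ha _ hb
  have key : ∀ x y : Box, Relation.ReflTransGen (fun x y => x ∈ D ∧ y ∈ D ∧ boxAdj x y) x y →
      Relation.ReflTransGen
        (fun x y => x ∈ boxTranslate v D ∧ y ∈ boxTranslate v D ∧ boxAdj x y)
        (x.1 + v.1, x.2 + v.2) (y.1 + v.1, y.2 + v.2) := by
    intro x y hxy
    induction hxy with
    | refl => exact Relation.ReflTransGen.refl
    | tail _ hstep ih =>
        exact ih.tail ⟨mem_boxTranslate' hstep.1, mem_boxTranslate' hstep.2.1,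
          boxAdj_translate hstep.2.2⟩
  have := key _ _ this
  convert this using 2 <;> simp [Prod.ext_iff] <;> constructor <;> intro <;> omega

lemma isSkewLike_translate {v : Box} {D : Set Box} (h : IsSkewLike D) :
    IsSkewLike (boxTranslate v D) := by
  obtain ⟨w, hw⟩ := h
  exact ⟨w - v, by rwa [boxTranslate_comp, add_sub_cancel]⟩

lemma nonempty_translate {v : Box} {D : Set Box} (h : D.Nonempty) :
    (boxTranslate v D).Nonempty := h.image _

lemma isBorderStrip_translate {v : Box} {B : Set Box} (h : IsBorderStrip B) :
    IsBorderStrip (boxTranslate v B) :=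
  ⟨nonempty_translate h.1, isSkewLike_translate h.2.1, edgewise_translate h.2.2.1,
    noTwoByTwo_translate h.2.2.2⟩

/-! ### Skew shape rectangle lemma and consequences -/

lemma skew_rect {lam mu : Partition'} {r1 c1 r2 c2 : ℤ}
    (h1 : (r1, c1) ∈ skewCells lam mu) (h2 : (r2, c2) ∈ skewCells lam mu)
    {r c : ℤ} (hr1 : r1 ≤ r) (hr2 : r ≤ r2) (hc1 : c1 ≤ c) (hc2 : c ≤ c2) :
    (r, c) ∈ skewCells lam mu := by
  obtain ⟨ha1, ha2, ha3⟩ := h1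
  obtain ⟨hb1, hb2, hb3⟩ := h2
  simp only [skewCells, Set.mem_setOf_eq] at *
  have h1r : (1:ℤ) ≤ r := le_trans ha1 hr1
  refine ⟨h1r, ?_, ?_⟩
  · have : mu.part r.toNat ≤ mu.part r1.toNat := by
      apply mu.antitone
      omega
    calc (mu.part r.toNat : ℤ) ≤ (mu.part r1.toNat : ℤ) := by exact_mod_cast this
    _ < c1 := ha2
    _ ≤ c := hc1
  · have : lam.part r2.toNat ≤ lam.part r.toNat := by
      apply lam.antitone
      omega
    calc c ≤ c2 := hc2
    _ ≤ (lam.part r2.toNat : ℤ) := hb3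
    _ ≤ (lam.part r.toNat : ℤ) := by exact_mod_cast this

/-- In a skew shape with no 2×2 block, boxes are determined by their content. -/
lemma content_inj_of_skewShape {D : Set Box} (hD : IsSkewShape D) (h22 : NoTwoByTwo D)
    {x y : Box} (hx : x ∈ D) (hy : y ∈ D) (hc : boxContent x = boxContent y) : x = y := by
  obtain ⟨lam, mu, -, rfl⟩ := hD
  have main : ∀ x y : Box, x ∈ skewCells lam mu → y ∈ skewCells lam mu →
      boxContent x = boxContent y → x.1 < y.1 → False := by
    intro x y hx hy hc hlt
    have hx' : (x.1, x.2) ∈ skewCells lam mu := by simpa using hx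
    have hy' : (y.1, y.2) ∈ skewCells lam mu := by simpa using hy
    have hyx2 : x.2 + 1 ≤ y.2 := by simp [boxContent] at hc; omega
    refine h22 (x.1, x.2) ⟨by simpa using hx, ?_, ?_, ?_⟩
    · exact skew_rect hx' hy' le_rfl (by omega) (by omega) (by omega)
    · exact skew_rect hx' hy' (by omega) (by omega) le_rfl (by omega)
    · exact skew_rect hx' hy' (by omega) (by omega) (by omega) (by omega)
  rcases lt_trichotomy x.1 y.1 with h | h | h
  · exact absurd (main x y hx hy hc h) not_false
  · have : x.2 = y.2 := by simp [boxContent] at hc; omega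
    exact Prod.ext h this
  · exact absurd (main y x hy hx hc.symm h) not_false

lemma content_inj_of_borderStrip {B : Set Box} (hB : IsBorderStrip B)
    {x y : Box} (hx : x ∈ B) (hy : y ∈ B) (hc : boxContent x = boxContent y) : x = y := by
  obtain ⟨v, hv⟩ := hB.2.1
  have h22 : NoTwoByTwo (boxTranslate v B) := noTwoByTwo_translate hB.2.2.2
  have := content_inj_of_skewShape hv h22 (mem_boxTranslate' hx) (mem_boxTranslate' hy)
    (by rw [content_translate, content_translate, hc])
  simpa [Prod.ext_iff] using this

/-- A skew shape is closed under the "square" containing two boxes of adjacent contents. -/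
lemma skew_succ_mem {D : Set Box} (hD : IsSkewShape D) {c e : Box} (hc : c ∈ D) (he : e ∈ D)
    (hce : boxContent e = boxContent c + 1) :
    (c.1 - 1, c.2) ∈ D ∨ (c.1, c.2 + 1) ∈ D := by
  obtain ⟨lam, mu, -, rfl⟩ := hD
  have hc' : (c.1, c.2) ∈ skewCells lam mu := by simpa using hc
  have he' : (e.1, e.2) ∈ skewCells lam mu := by simpa using he
  simp only [boxContent] at hce
  rcases le_or_gt e.1 c.1 with h | h
  · -- e weakly above c: e.2 ≤ c.2, and (c.1 - 1, c.2) works unless e.1 = c.1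
    rcases eq_or_lt_of_le h with heq | hlt
    · right
      have : e.2 = c.2 + 1 := by omega
      have := he'
      rw [show ((e.1 : ℤ), (e.2:ℤ)) = (c.1, c.2+1) by rw [Prod.ext_iff]; constructor <;> omega] at this
      exact this
    · left
      exact skew_rect he' hc' (by omega) (by omega) (by omega) (by omega)
  · right
    exact skew_rect hc' he' (by omega) (by omega) (by omega) (by omega)

/-! ### Connectivity: contents convex, crossing lemma -/

section Conn
variable {D : Set Box}

lemma boxAdj_content {a b : Box} (h : boxAdj a b) :
    boxContent b = boxContent a + 1 ∨ boxContent a = boxContent b + 1 := by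
  rcases h with ⟨h1, h2 | h2⟩ | ⟨h1, h2 | h2⟩ <;> simp [boxContent] <;> omega

private def rel (D : Set Box) : Box → Box → Prop := fun x y => x ∈ D ∧ y ∈ D ∧ boxAdj x y

/-- Contents along connected sets are convex. -/
lemma contents_convex (hconn : EdgewiseConnected D) {x y : Box} (hx : x ∈ D) (hy : y ∈ D)
    {c : ℤ} (h1 : boxContent x ≤ c) (h2 : c ≤ boxContent y) :
    ∃ z ∈ D, boxContent z = c := by
  have key : ∀ a b : Box, Relation.ReflTransGen (rel D) a b → a ∈ D →
      ∀ c : ℤ, (boxContent a ≤ c ∧ c ≤ boxContent b) ∨ (boxContent b ≤ c ∧ c ≤ boxContent a) →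
      ∃ z ∈ D, boxContent z = c := by
    intro a b hab ha
    induction hab with
    | refl => intro c hc; exact ⟨a, ha, by omega⟩
    | @tail b b' _ hstep ih =>
        intro c hc
        rcases boxAdj_content hstep.2.2 with h | h
        · rcases hc with hc | hc
          · by_cases hcb : c ≤ boxContent b
            · exact ih c (Or.inl ⟨hc.1, hcb⟩)
            · exact ⟨b', hstep.2.1, by omega⟩
          · exact ih c (Or.inr ⟨by omega, hc.2⟩)
        · rcases hc with hc | hc
          · exact ih c (Or.inl ⟨hc.1, by omega⟩)
          · by_cases hcb : boxContent b ≤ c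
            · exact ih c (Or.inr ⟨hcb, hc.2⟩)
            · exact ⟨b', hstep.2.1, by omega⟩
  exact key x y (hconn x hx y hy) hx c (Or.inl ⟨h1, h2⟩)

/-- Crossing lemma: a connected path from content ≤ i to content ≥ i + 1 must cross. -/
lemma crossing (hconn : EdgewiseConnected D) {x y : Box} (hx : x ∈ D) (hy : y ∈ D)
    {i : ℤ} (h1 : boxContent x ≤ i) (h2 : i + 1 ≤ boxContent y) :
    ∃ a ∈ D, ∃ b ∈ D, boxAdj a b ∧ boxContent a = i ∧ boxContent b = i + 1 := by
  have key : ∀ a b : Box, Relation.ReflTransGen (rel D) a b →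
      boxContent a ≤ i → i + 1 ≤ boxContent b →
      ∃ a' ∈ D, ∃ b' ∈ D, boxAdj a' b' ∧ boxContent a' = i ∧ boxContent b' = i + 1 := by
    intro a b hab
    induction hab with
    | refl => intro h1 h2; omega
    | @tail b b' _ hstep ih =>
        intro ha hb'
        by_cases hbc : i + 1 ≤ boxContent b
        · exact ih ha hbc
        · have := boxAdj_content hstep.2.2
          exact ⟨b, hstep.1, b', hstep.2.1, hstep.2.2, by omega, by omega⟩
  exact key x y (hconn x hx y hy) h1 h2

end Conn

/-- In a border strip, the box of content one more than that of `x` sits directly above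
or directly to the right of `x`. -/
lemma ribbon_succ {B : Set Box} (hB : IsBorderStrip B) {x y : Box} (hx : x ∈ B) (hy : y ∈ B)
    (hxy : boxContent y = boxContent x + 1) :
    y = (x.1 - 1, x.2) ∨ y = (x.1, x.2 + 1) := by
  obtain ⟨a, ha, b, hb, hadj, hca, hcb⟩ :=
    crossing hB.2.2.1 hx hy (le_refl (boxContent x)) (by omega)
  have hax : a = x := content_inj_of_borderStrip hB ha hx hca
  have hby : b = y := content_inj_of_borderStrip hB hb hy (by omega)
  subst hax hby
  rcases hadj with ⟨h1, h2 | h2⟩ | ⟨h1, h2 | h2⟩ <;> simp [boxContent] at hca hcb ⊢ <;>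
    first
      | (left; rw [Prod.ext_iff]; constructor <;> omega)
      | (right; rw [Prod.ext_iff]; constructor <;> omega)

/-! ### Staircase paths -/

noncomputable def nextBox (u : ℤ → Prop) (b : Box) : Box :=
  if u (boxContent b) then (b.1 - 1, b.2) else (b.1, b.2 + 1)

noncomputable def prevBox (u : ℤ → Prop) (b : Box) : Box :=
  if u (boxContent b - 1) then (b.1 + 1, b.2) else (b.1, b.2 - 1)

noncomputable def pathF (u : ℤ → Prop) (s : Box) : ℕ → Box
  | 0 => s
  | k + 1 => nextBox u (pathF u s k)

def ribbonSet (u : ℤ → Prop) (s : Box) (m : ℕ) : Set Box :=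
  pathF u s '' {k : ℕ | k < m}

section Path

variable (u : ℤ → Prop) (s : Box) (m : ℕ)

lemma content_nextBox (b : Box) : boxContent (nextBox u b) = boxContent b + 1 := by
  unfold nextBox; split <;> simp [boxContent] <;> ring

lemma nextBox_cases (b : Box) :
    nextBox u b = (b.1 - 1, b.2) ∨ nextBox u b = (b.1, b.2 + 1) := by
  unfold nextBox; split
  · exact Or.inl rfl
  · exact Or.inr rfl

lemma prevBox_nextBox (b : Box) : nextBox u (prevBox u b) = b := by
  by_cases h : u (boxContent b - 1)
  · have h1 : prevBox u b = (b.1 + 1, b.2) := if_pos h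
    have h2 : boxContent (b.1 + 1, b.2) = boxContent b - 1 := by simp [boxContent]; ring
    rw [h1]
    unfold nextBox
    rw [h2, if_pos h]
    simp [Prod.ext_iff]
  · have h1 : prevBox u b = (b.1, b.2 - 1) := if_neg h
    have h2 : boxContent (b.1, b.2 - 1) = boxContent b - 1 := by simp [boxContent]; ring
    rw [h1]
    unfold nextBox
    rw [h2, if_neg h]
    simp [Prod.ext_iff]

lemma content_pathF (k : ℕ) : boxContent (pathF u s k) = boxContent s + k := by
  induction k with
  | zero => simp [pathF]
  | succ k ih => rw [pathF, content_nextBox, ih]; push_cast; ring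

lemma pathF_snd (k : ℕ) : (pathF u s k).2 = (pathF u s k).1 + boxContent s + k := by
  have := content_pathF u s k
  simp only [boxContent] at this ⊢
  omega

lemma pathF_row_mono : ∀ {k l : ℕ}, k ≤ l →
    (pathF u s l).1 ≤ (pathF u s k).1 ∧ (pathF u s k).1 ≤ (pathF u s l).1 + ((l : ℤ) - k) := by
  intro k l hkl
  induction l, hkl using Nat.le_induction with
  | base => simp
  | succ l hkl ih =>
      obtain ⟨ih1, ih2⟩ := ih
      rcases nextBox_cases u (pathF u s l) with h | h <;>
        (rw [pathF, h]; dsimp only; constructor <;> omega)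

lemma pathF_col_mono {k l : ℕ} (hkl : k ≤ l) : (pathF u s k).2 ≤ (pathF u s l).2 := by
  have h1 := pathF_row_mono u s hkl
  have h2 := pathF_snd u s k
  have h3 := pathF_snd u s l
  omega

lemma pathF_inj {k l : ℕ} (h : pathF u s k = pathF u s l) : k = l := by
  have h1 := content_pathF u s k
  have h2 := content_pathF u s l
  rw [h] at h1
  omega

lemma mem_ribbonSet {x : Box} : x ∈ ribbonSet u s m ↔ ∃ k < m, pathF u s k = x := by
  simp [ribbonSet]

lemma ribbonSet_content_inj {x y : Box} (hx : x ∈ ribbonSet u s m) (hy : y ∈ ribbonSet u s m)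
    (h : boxContent x = boxContent y) : x = y := by
  rw [mem_ribbonSet] at hx hy
  obtain ⟨k, hk, rfl⟩ := hx
  obtain ⟨l, hl, rfl⟩ := hy
  rw [content_pathF, content_pathF] at h
  have : k = l := by omega
  rw [this]

lemma ribbonSet_noTwoByTwo : NoTwoByTwo (ribbonSet u s m) := by
  intro b hb
  have h1 : boxContent b = boxContent (b.1 + 1, b.2 + 1) := by simp [boxContent]
  have := ribbonSet_content_inj u s m hb.1 hb.2.2.2 h1
  have : b.1 = b.1 + 1 := congrArg Prod.fst this
  omega

lemma ribbonSet_nonempty (hm : 1 ≤ m) : (ribbonSet u s m).Nonempty :=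
  ⟨s, (mem_ribbonSet u s m).2 ⟨0, hm, rfl⟩⟩

lemma pathF_adj (k : ℕ) : boxAdj (pathF u s k) (pathF u s (k + 1)) := by
  rcases nextBox_cases u (pathF u s k) with h | h <;> rw [pathF, h] <;> simp [boxAdj]

lemma ribbonSet_connected : EdgewiseConnected (ribbonSet u s m) := by
  have key : ∀ l, l < m → ∀ k, k ≤ l →
      Relation.ReflTransGen
        (fun x y => x ∈ ribbonSet u s m ∧ y ∈ ribbonSet u s m ∧ boxAdj x y)
        (pathF u s k) (pathF u s l) := by
    intro l hl
    induction l with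
    | zero => intro k hk; interval_cases k; exact Relation.ReflTransGen.refl
    | succ l ih =>
        intro k hk
        rcases Nat.lt_or_ge k (l + 1) with h | h
        · refine Relation.ReflTransGen.tail (ih (by omega) k (by omega)) ?_
          exact ⟨(mem_ribbonSet u s m).2 ⟨l, by omega, rfl⟩,
            (mem_ribbonSet u s m).2 ⟨l + 1, by omega, rfl⟩, pathF_adj u s l⟩
        · have : k = l + 1 := by omega
          rw [this]
  rintro x hx y hy
  rw [mem_ribbonSet] at hx hy
  obtain ⟨k, hk, rfl⟩ := hx
  obtain ⟨l, hl, rfl⟩ := hy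
  rcases le_or_gt k l with h | h
  · exact key l hl k h
  · exact (@Relation.ReflTransGen.stdSymm _ _
      ⟨fun x y h => ⟨h.2.1, h.1, boxAdj_symm h.2.2⟩⟩).symm _ _ (key k hk l h.le)

end Path

/-! ### ribbonSet is skew-like -/

section SkewLike

variable (u : ℤ → Prop) (s : Box) (m : ℕ)

private def fRow (k : ℕ) : ℤ := (pathF u s k).1

private lemma fRow_def (k : ℕ) : fRow u s k = (pathF u s k).1 := rfl

private lemma fRow_mono {k l : ℕ} (h : k ≤ l) : fRow u s l ≤ fRow u s k :=
  (pathF_row_mono u s h).1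

private lemma fRow_hit : ∀ (n k : ℕ) (r : ℤ), fRow u s (k + n) ≤ r → r ≤ fRow u s k →
    ∃ j, k ≤ j ∧ j ≤ k + n ∧ fRow u s j = r := by
  intro n
  induction n with
  | zero =>
      intro k r h1 h2
      rw [Nat.add_zero] at h1
      exact ⟨k, le_rfl, by omega, by omega⟩
  | succ n ih =>
      intro k r h1 h2
      by_cases h : fRow u s k = r
      · exact ⟨k, le_rfl, by omega, h⟩
      · have hk1 : fRow u s k - 1 ≤ fRow u s (k + 1) := by
          have := (pathF_row_mono u s (show k ≤ k + 1 by omega)).2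
          rw [← fRow_def, ← fRow_def] at this
          push_cast at this
          omega
        have h1' : fRow u s ((k + 1) + n) ≤ r := by
          have he : (k + 1) + n = k + (n + 1) := by omega
          rw [he]; exact h1
        obtain ⟨j, hj1, hj2, hj3⟩ := ih (k + 1) r h1' (by omega)
        exact ⟨j, by omega, by omega, hj3⟩

private noncomputable def rowK (r : ℤ) : Finset ℕ :=
  (Finset.range m).filter (fun k => fRow u s k = r)

private lemma mem_rowK {r : ℤ} {k : ℕ} : k ∈ rowK u s m r ↔ k < m ∧ fRow u s k = r := by
  simp [rowK]

private noncomputable def aF (r : ℤ) : ℕ :=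
  if h : (rowK u s m r).Nonempty then (rowK u s m r).min' h else 0

private noncomputable def bF (r : ℤ) : ℕ :=
  if h : (rowK u s m r).Nonempty then (rowK u s m r).max' h else 0

private lemma aF_mem {r : ℤ} (h : (rowK u s m r).Nonempty) : aF u s m r ∈ rowK u s m r := by
  rw [aF, dif_pos h]; exact Finset.min'_mem _ h

private lemma bF_mem {r : ℤ} (h : (rowK u s m r).Nonempty) : bF u s m r ∈ rowK u s m r := by
  rw [bF, dif_pos h]; exact Finset.max'_mem _ h

private lemma aF_le {r : ℤ} (h : (rowK u s m r).Nonempty) {k : ℕ} (hk : k ∈ rowK u s m r) :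
    aF u s m r ≤ k := by
  rw [aF, dif_pos h]; exact Finset.min'_le _ _ hk

private lemma le_bF {r : ℤ} (h : (rowK u s m r).Nonempty) {k : ℕ} (hk : k ∈ rowK u s m r) :
    k ≤ bF u s m r := by
  rw [bF, dif_pos h]; exact Finset.le_max' _ _ hk

lemma isSkewLike_ribbonSet (hm : 1 ≤ m) : IsSkewLike (ribbonSet u s m) := by
  classical
  set R1 : ℤ := fRow u s (m - 1) with hR1def
  have hfs : fRow u s 0 = s.1 := rfl
  have hR1 : R1 ≤ s.1 := by rw [hR1def, ← hfs]; exact fRow_mono u s (by omega)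
  set n : ℕ := (s.1 - R1).toNat + 1 with hndef
  have hnZ : (n : ℤ) = s.1 - R1 + 1 := by rw [hndef]; push_cast; omega
  have hrange : ∀ k, k < m → R1 ≤ fRow u s k ∧ fRow u s k ≤ s.1 := by
    intro k hk
    refine ⟨?_, by rw [← hfs]; exact fRow_mono u s (by omega)⟩
    rw [hR1def]; exact fRow_mono u s (by omega)
  have hne : ∀ r : ℤ, R1 ≤ r → r ≤ s.1 → (rowK u s m r).Nonempty := by
    intro r h1 h2
    obtain ⟨j, hj1, hj2, hj3⟩ := fRow_hit u s (m - 1) 0 r (by rw [Nat.zero_add, ← hR1def]; exact h1) (by rwa [hfs])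
    exact ⟨j, (mem_rowK u s m).2 ⟨by omega, hj3⟩⟩
  have horder : ∀ {r1 r2 : ℤ} {k l : ℕ}, k ∈ rowK u s m r2 → l ∈ rowK u s m r1 → r1 < r2 →
      k < l := by
    intro r1 r2 k l hk hl h
    rw [mem_rowK] at hk hl
    by_contra hc
    push_neg at hc
    have := fRow_mono u s hc
    omega
  have hinterval : ∀ {r : ℤ}, (rowK u s m r).Nonempty → ∀ {k : ℕ},
      aF u s m r ≤ k → k ≤ bF u s m r → k ∈ rowK u s m r := by
    intro r h k h1 h2
    have ha := aF_mem u s m h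
    have hb := bF_mem u s m h
    rw [mem_rowK] at ha hb ⊢
    have m1 := fRow_mono u s h1
    have m2 := fRow_mono u s h2
    exact ⟨by omega, by omega⟩
  have hcol : ∀ k : ℕ, (pathF u s k).2 = fRow u s k + (s.2 - s.1) + k := by
    intro k
    have h1 := pathF_snd u s k
    simp only [boxContent] at h1
    rw [fRow_def]
    omega
  have hknn : ∀ {r : ℤ} {k : ℕ}, k ∈ rowK u s m r → 0 ≤ r - s.1 + k := by
    intro r k hk
    rw [mem_rowK] at hk
    have h1 := pathF_col_mono u s (Nat.zero_le k)
    have h2 := hcol k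
    have h3 : (pathF u s 0).2 = s.2 := rfl
    omega
  -- the partition functions
  set lamf : ℕ → ℕ := fun i =>
    if 1 ≤ i ∧ i ≤ n then (R1 + (i : ℤ) - 1 - s.1 + (bF u s m (R1 + (i : ℤ) - 1) : ℤ) + 1).toNat
    else if i = 0 then (R1 - s.1 + (bF u s m R1 : ℤ) + 1).toNat else 0 with hlamf
  set muf : ℕ → ℕ := fun i =>
    if 1 ≤ i ∧ i ≤ n then (R1 + (i : ℤ) - 1 - s.1 + (aF u s m (R1 + (i : ℤ) - 1) : ℤ)).toNat
    else if i = 0 then (R1 - s.1 + (aF u s m R1 : ℤ)).toNat else 0 with hmuf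
  have hrB : ∀ i : ℕ, 1 ≤ i → i ≤ n → R1 ≤ R1 + (i : ℤ) - 1 ∧ R1 + (i : ℤ) - 1 ≤ s.1 := by
    intro i h1 h2
    have : (i : ℤ) ≤ (n : ℤ) := by exact_mod_cast h2
    constructor <;> omega
  have hlamval : ∀ i : ℕ, 1 ≤ i → i ≤ n →
      (lamf i : ℤ) = R1 + (i : ℤ) - 1 - s.1 + (bF u s m (R1 + (i : ℤ) - 1) : ℤ) + 1 := by
    intro i h1 h2
    simp only [hlamf]
    rw [if_pos (show 1 ≤ i ∧ i ≤ n from ⟨h1, h2⟩)]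
    rw [Int.toNat_of_nonneg]
    have hr := hrB i h1 h2
    have := hknn (bF_mem u s m (hne _ hr.1 hr.2))
    omega
  have hmuval : ∀ i : ℕ, 1 ≤ i → i ≤ n →
      (muf i : ℤ) = R1 + (i : ℤ) - 1 - s.1 + (aF u s m (R1 + (i : ℤ) - 1) : ℤ) := by
    intro i h1 h2
    simp only [hmuf]
    rw [if_pos (show 1 ≤ i ∧ i ≤ n from ⟨h1, h2⟩)]
    rw [Int.toNat_of_nonneg]
    have hr := hrB i h1 h2
    have := hknn (aF_mem u s m (hne _ hr.1 hr.2))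
    omega
  have hone : R1 + ((1 : ℕ) : ℤ) - 1 = R1 := by push_cast; ring
  have hbstep : ∀ r : ℤ, R1 ≤ r → r + 1 ≤ s.1 →
      (bF u s m (r + 1) : ℤ) < aF u s m r ∧ (aF u s m r : ℤ) ≤ bF u s m r := by
    intro r h1 h2
    have hner : (rowK u s m r).Nonempty := hne r h1 (by omega)
    have hner1 : (rowK u s m (r + 1)).Nonempty := hne (r + 1) (by omega) h2
    have h3 := horder (bF_mem u s m hner1) (aF_mem u s m hner) (by omega)
    have h4 := le_bF u s m hner (aF_mem u s m hner)
    exact ⟨by exact_mod_cast h3, by exact_mod_cast h4⟩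
  have hlam_step : ∀ i, lamf (i + 1) ≤ lamf i := by
    intro i
    rcases Nat.eq_zero_or_pos i with rfl | hi
    · apply le_of_eq
      have h1 : lamf (0 + 1) = lamf 1 := rfl
      rw [h1]
      have h2 := hlamval 1 le_rfl (by omega)
      have h3 : (lamf 0 : ℤ) = R1 - s.1 + (bF u s m R1 : ℤ) + 1 := by
        simp only [hlamf]
        rw [if_neg (by omega), if_pos trivial, Int.toNat_of_nonneg]
        have := hknn (bF_mem u s m (hne _ le_rfl hR1))
        omega
      rw [hone] at h2
      omega
    · by_cases h2 : i + 1 ≤ n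
      · have v1 := hlamval (i + 1) (by omega) h2
        have v2 := hlamval i hi (by omega)
        have harg : R1 + ((i + 1 : ℕ) : ℤ) - 1 = (R1 + (i : ℤ) - 1) + 1 := by push_cast; ring
        rw [harg] at v1
        have hr := hrB i hi (by omega)
        have hin : (i : ℤ) + 1 ≤ (n : ℤ) := by exact_mod_cast h2
        have hb := hbstep (R1 + (i : ℤ) - 1) hr.1 (by omega)
        omega
      · have h3 : lamf (i + 1) = 0 := by
          simp only [hlamf]
          rw [if_neg (by omega), if_neg (by omega)]
        omega
  have hmu_step : ∀ i, muf (i + 1) ≤ muf i := by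
    intro i
    rcases Nat.eq_zero_or_pos i with rfl | hi
    · apply le_of_eq
      have h1 : muf (0 + 1) = muf 1 := rfl
      rw [h1]
      have h2 := hmuval 1 le_rfl (by omega)
      have h3 : (muf 0 : ℤ) = R1 - s.1 + (aF u s m R1 : ℤ) := by
        simp only [hmuf]
        rw [if_neg (by omega), if_pos trivial, Int.toNat_of_nonneg]
        have := hknn (aF_mem u s m (hne _ le_rfl hR1))
        omega
      rw [hone] at h2
      omega
    · by_cases h2 : i + 1 ≤ n
      · have v1 := hmuval (i + 1) (by omega) h2
        have v2 := hmuval i hi (by omega)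
        have harg : R1 + ((i + 1 : ℕ) : ℤ) - 1 = (R1 + (i : ℤ) - 1) + 1 := by push_cast; ring
        rw [harg] at v1
        have hr := hrB i hi (by omega)
        have hin : (i : ℤ) + 1 ≤ (n : ℤ) := by exact_mod_cast h2
        have hb := hbstep (R1 + (i : ℤ) - 1) hr.1 (by omega)
        have hab : (aF u s m ((R1 + (i:ℤ) - 1) + 1) : ℤ) ≤ (bF u s m ((R1 + (i:ℤ) - 1) + 1) : ℤ) := by
          have hner1 : (rowK u s m ((R1 + (i:ℤ) - 1) + 1)).Nonempty := hne _ (by omega) (by omega)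
          exact_mod_cast le_bF u s m hner1 (aF_mem u s m hner1)
        omega
      · have h3 : muf (i + 1) = 0 := by
          simp only [hmuf]
          rw [if_neg (by omega), if_neg (by omega)]
        omega
  have hml : ∀ i, muf i ≤ lamf i := by
    intro i
    by_cases h1 : 1 ≤ i ∧ i ≤ n
    · have v1 := hmuval i h1.1 h1.2
      have v2 := hlamval i h1.1 h1.2
      have hr := hrB i h1.1 h1.2
      have hner : (rowK u s m (R1 + (i:ℤ) - 1)).Nonempty := hne _ hr.1 hr.2
      have hab := le_bF u s m hner (aF_mem u s m hner)
      have hab' : (aF u s m (R1 + (i:ℤ) - 1) : ℤ) ≤ bF u s m (R1 + (i:ℤ) - 1) := by exact_mod_cast hab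
      omega
    · by_cases h2 : i = 0
      · subst h2
        have h3 : (muf 0 : ℤ) = R1 - s.1 + (aF u s m R1 : ℤ) := by
          simp only [hmuf]
          rw [if_neg (by omega), if_pos trivial, Int.toNat_of_nonneg]
          have := hknn (aF_mem u s m (hne _ le_rfl hR1))
          omega
        have h4 : (lamf 0 : ℤ) = R1 - s.1 + (bF u s m R1 : ℤ) + 1 := by
          simp only [hlamf]
          rw [if_neg (by omega), if_pos trivial, Int.toNat_of_nonneg]
          have := hknn (bF_mem u s m (hne _ le_rfl hR1))
          omega
        have hner : (rowK u s m R1).Nonempty := hne _ le_rfl hR1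
        have hab := le_bF u s m hner (aF_mem u s m hner)
        have hab' : (aF u s m R1 : ℤ) ≤ bF u s m R1 := by exact_mod_cast hab
        omega
      · have h3 : muf i = 0 := by
          simp only [hmuf]; rw [if_neg h1, if_neg h2]
        omega
  have hlam0 : ∀ i, n + 1 ≤ i → lamf i = 0 := by
    intro i hi
    simp only [hlamf]
    rw [if_neg (by omega), if_neg (by omega)]
  have hmu0 : ∀ i, n + 1 ≤ i → muf i = 0 := by
    intro i hi
    simp only [hmuf]
    rw [if_neg (by omega), if_neg (by omega)]
  refine ⟨(1 - R1, 1 - s.2), ⟨lamf, antitone_nat_of_succ_le hlam_step, n + 1, hlam0⟩,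
    ⟨muf, antitone_nat_of_succ_le hmu_step, n + 1, hmu0⟩, hml, ?_⟩
  ext x
  obtain ⟨r, c⟩ := x
  rw [mem_boxTranslate]
  simp only [skewCells, Set.mem_setOf_eq, mem_ribbonSet]
  constructor
  · rintro ⟨k, hk, hpk⟩
    have hr1 : fRow u s k = r - (1 - R1) := by rw [fRow_def, hpk]
    have hc1 : (pathF u s k).2 = c - (1 - s.2) := by rw [hpk]
    have hc2 := hcol k
    have hra := hrange k hk
    have hr2 : 1 ≤ r := by omega
    have hrn : r ≤ (n : ℤ) := by omega
    have hrt : ((r.toNat : ℕ) : ℤ) = r := Int.toNat_of_nonneg (by omega)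
    have h1i : 1 ≤ r.toNat := by omega
    have h2i : r.toNat ≤ n := by omega
    have harg : R1 + ((r.toNat : ℕ) : ℤ) - 1 = r - (1 - R1) := by omega
    have v1 := hmuval r.toNat h1i h2i
    have v2 := hlamval r.toNat h1i h2i
    rw [harg] at v1 v2
    have hkK : k ∈ rowK u s m (r - (1 - R1)) := (mem_rowK u s m).2 ⟨hk, hr1⟩
    have hner : (rowK u s m (r - (1 - R1))).Nonempty := ⟨k, hkK⟩
    have ha := aF_le u s m hner hkK
    have hb := le_bF u s m hner hkK
    have ha' : (aF u s m (r - (1 - R1)) : ℤ) ≤ k := by exact_mod_cast ha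
    have hb' : (k : ℤ) ≤ bF u s m (r - (1 - R1)) := by exact_mod_cast hb
    exact ⟨hr2, by omega, by omega⟩
  · rintro ⟨hr2, hmu, hlam⟩
    have h1i : 1 ≤ r.toNat := by omega
    have h2i : r.toNat ≤ n := by
      by_contra hc
      have e1 := hlam0 r.toNat (by omega)
      have e2 := hmu0 r.toNat (by omega)
      rw [e1] at hlam
      rw [e2] at hmu
      simp at hlam hmu
      omega
    have hrt : ((r.toNat : ℕ) : ℤ) = r := Int.toNat_of_nonneg (by omega)
    have hrn : r ≤ (n : ℤ) := by omega
    have harg : R1 + ((r.toNat : ℕ) : ℤ) - 1 = r - (1 - R1) := by omega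
    have v1 := hmuval r.toNat h1i h2i
    have v2 := hlamval r.toNat h1i h2i
    rw [harg] at v1 v2
    have hrr : R1 ≤ r - (1 - R1) ∧ r - (1 - R1) ≤ s.1 := by
      constructor <;> omega
    have hner : (rowK u s m (r - (1 - R1))).Nonempty := hne _ hrr.1 hrr.2
    have hann := hknn (aF_mem u s m hner)
    set kZ : ℤ := c - (r - (1 - R1)) + s.1 - 1 with hkZ
    have hk0 : 0 ≤ kZ := by
      have := hknn (aF_mem u s m hner)
      omega
    have hka : (aF u s m (r - (1 - R1)) : ℤ) ≤ kZ := by omega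
    have hkb : kZ ≤ (bF u s m (r - (1 - R1)) : ℤ) := by omega
    have hkt : ((kZ.toNat : ℕ) : ℤ) = kZ := Int.toNat_of_nonneg hk0
    have hkK : kZ.toNat ∈ rowK u s m (r - (1 - R1)) := by
      apply hinterval hner
      · exact_mod_cast hka.trans_eq hkt.symm
      · exact_mod_cast hkt.le.trans hkb
    rw [mem_rowK] at hkK
    refine ⟨kZ.toNat, hkK.1, ?_⟩
    have hc2 := hcol kZ.toNat
    rw [Prod.ext_iff]
    constructor
    · rw [← fRow_def, hkK.2]
    · rw [hc2, hkK.2]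
      omega

end SkewLike

lemma isBorderStrip_ribbonSet (u : ℤ → Prop) (s : Box) (m : ℕ) (hm : 1 ≤ m) :
    IsBorderStrip (ribbonSet u s m) :=
  ⟨ribbonSet_nonempty u s m hm, isSkewLike_ribbonSet u s m hm, ribbonSet_connected u s m,
    ribbonSet_noTwoByTwo u s m⟩

/-! ### More ribbonSet lemmas -/

section RibbonMore

variable (u : ℤ → Prop) (s : Box) (m : ℕ)

lemma ribbonSet_ncard : (ribbonSet u s m).ncard = m := by
  have h0 : {k : ℕ | k < m} = ↑(Finset.range m) := by
    ext k; simp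
  rw [ribbonSet, h0, Set.ncard_image_of_injOn (fun k _ l _ h => pathF_inj u s h),
    Set.ncard_coe_finset, Finset.card_range]

lemma ribbonSet_contents (hm : 1 ≤ m) :
    boxContent '' ribbonSet u s m = Set.Icc (boxContent s) (boxContent s + m - 1) := by
  ext c
  simp only [Set.mem_image, Set.mem_Icc]
  constructor
  · rintro ⟨x, hx, rfl⟩
    rw [mem_ribbonSet] at hx
    obtain ⟨k, hk, rfl⟩ := hx
    rw [content_pathF]
    omega
  · rintro ⟨h1, h2⟩
    refine ⟨pathF u s (c - boxContent s).toNat, (mem_ribbonSet u s m).2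
      ⟨(c - boxContent s).toNat, by omega, rfl⟩, ?_⟩
    rw [content_pathF]
    omega

lemma ribbonSet_isStartBox (hm : 1 ≤ m) {x : Box} (hx : IsStartBox (ribbonSet u s m) x) :
    x = s := by
  obtain ⟨hxB, hL, hD⟩ := hx
  rw [mem_ribbonSet] at hxB
  obtain ⟨k, hk, rfl⟩ := hxB
  rcases Nat.eq_zero_or_pos k with rfl | hkpos
  · rfl
  · exfalso
    obtain ⟨k', rfl⟩ : ∃ k', k = k' + 1 := ⟨k - 1, by omega⟩
    have hmem : pathF u s k' ∈ ribbonSet u s m :=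
      (mem_ribbonSet u s m).2 ⟨k', by omega, rfl⟩
    rcases nextBox_cases u (pathF u s k') with h | h
    · refine hD ?_
      have he : ((pathF u s (k' + 1)).1 + 1, (pathF u s (k' + 1)).2) = pathF u s k' := by
        rw [pathF, h]
        dsimp only
        rw [Prod.ext_iff]
        constructor <;> dsimp only <;> omega
      rwa [he]
    · refine hL ?_
      have he : ((pathF u s (k' + 1)).1, (pathF u s (k' + 1)).2 - 1) = pathF u s k' := by
        rw [pathF, h]
        dsimp only
        rw [Prod.ext_iff]
        constructor <;> dsimp only <;> omega
      rwa [he]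

lemma ribbonSet_isEndBox (hm : 1 ≤ m) {x : Box} (hx : IsEndBox (ribbonSet u s m) x) :
    x = pathF u s (m - 1) := by
  obtain ⟨hxB, hU, hR⟩ := hx
  rw [mem_ribbonSet] at hxB
  obtain ⟨k, hk, rfl⟩ := hxB
  rcases Nat.lt_or_ge k (m - 1) with hkm | hkm
  · exfalso
    have hmem : pathF u s (k + 1) ∈ ribbonSet u s m :=
      (mem_ribbonSet u s m).2 ⟨k + 1, by omega, rfl⟩
    rcases nextBox_cases u (pathF u s k) with h | h <;> rw [pathF, h] at hmem
    · exact hU hmem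
    · exact hR hmem
  · congr 1
    omega

end RibbonMore

/-- Normalization: any border strip whose contents form the interval
`[content s, content s + m - 1]`, with `s` a member, is a staircase path. -/
lemma ribbon_eq_ribbonSet {B : Set Box} (hB : IsBorderStrip B) {s : Box} (hs : s ∈ B)
    {m : ℕ} (hm : 1 ≤ m)
    (hcont : boxContent '' B = Set.Icc (boxContent s) (boxContent s + m - 1)) :
    B = ribbonSet (StripGoesUpAt B) s m := by
  set u : ℤ → Prop := StripGoesUpAt B with hu
  have key : ∀ k, k < m → pathF u s k ∈ B := by
    intro k
    induction k with
    | zero => intro _; exact hs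
    | succ k ih =>
        intro hk1
        have hx := ih (by omega)
        have hcx : boxContent (pathF u s k) = boxContent s + k := content_pathF u s k
        have hy : ∃ y ∈ B, boxContent y = boxContent s + k + 1 := by
          have : boxContent s + k + 1 ∈ Set.Icc (boxContent s) (boxContent s + m - 1) := by
            simp only [Set.mem_Icc]
            omega
          rw [← hcont] at this
          obtain ⟨y, hy, hyc⟩ := this
          exact ⟨y, hy, hyc⟩
        obtain ⟨y, hyB, hyc⟩ := hy
        have hsucc := ribbon_succ hB hx hyB (by omega)
        rcases hsucc with h | h
        · have hup : u (boxContent (pathF u s k)) := by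
            rw [hu]
            exact ⟨pathF u s k, hx, rfl, by rw [← h]; exact hyB⟩
          rw [pathF, nextBox, if_pos hup, ← h]
          exact hyB
        · have hnup : ¬u (boxContent (pathF u s k)) := by
            rw [hu]
            rintro ⟨b, hbB, hbc, habove⟩
            have hbx : b = pathF u s k := content_inj_of_borderStrip hB hbB hx hbc
            rw [hbx] at habove
            have hne2 : ((pathF u s k).1 - 1, (pathF u s k).2) = y := by
              refine content_inj_of_borderStrip hB habove hyB ?_
              simp only [boxContent] at hcx hyc ⊢
              omega
            rw [h, Prod.mk.injEq] at hne2
            omega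
          rw [pathF, nextBox, if_neg hnup, ← h]
          exact hyB
  apply Set.eq_of_subset_of_subset
  · intro x hxB
    have hcx : boxContent x ∈ Set.Icc (boxContent s) (boxContent s + m - 1) := by
      rw [← hcont]; exact ⟨x, hxB, rfl⟩
    simp only [Set.mem_Icc] at hcx
    set k : ℕ := (boxContent x - boxContent s).toNat with hk
    have hkm : k < m := by omega
    have : pathF u s k = x := by
      refine content_inj_of_borderStrip hB (key k hkm) hxB ?_
      rw [content_pathF]
      omega
    rw [← this]
    exact (mem_ribbonSet u s m).2 ⟨k, hkm, rfl⟩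
  · intro x hx
    rw [mem_ribbonSet] at hx
    obtain ⟨k, hkm, rfl⟩ := hx
    exact key k hkm

/-! ### Finiteness of skew shapes; contents form an interval -/

lemma skewShape_finite {D : Set Box} (hD : IsSkewShape D) : D.Finite := by
  obtain ⟨lam, mu, -, rfl⟩ := hD
  obtain ⟨N, hN⟩ := lam.eventually_zero
  apply Set.Finite.subset (Set.finite_Icc ((1 : ℤ), (1 : ℤ)) ((N : ℤ), (lam.part 1 : ℤ)))
  rintro ⟨r, c⟩ ⟨h1, h2, h3⟩
  have hc1 : 0 ≤ (mu.part (r, c).1.toNat : ℤ) := by positivity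
  have hrN : r ≤ (N : ℤ) := by
    by_contra hr
    push_neg at hr
    have : lam.part (r, c).1.toNat = 0 := hN _ (by omega)
    rw [this] at h3
    simp at h3
    omega
  have hlam : lam.part (r, c).1.toNat ≤ lam.part 1 := lam.antitone (by omega)
  simp only [Set.mem_Icc, Prod.mk_le_mk]
  refine ⟨⟨h1, by omega⟩, hrN, ?_⟩
  calc c ≤ (lam.part (r, c).1.toNat : ℤ) := h3
  _ ≤ (lam.part 1 : ℤ) := by exact_mod_cast hlam

lemma contents_eq_Icc {D : Set Box} (hfin : D.Finite) (hne : D.Nonempty)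
    (hconn : EdgewiseConnected D) :
    ∃ p : ℤ, (∃ s ∈ D, boxContent s = p) ∧
      boxContent '' D = Set.Icc p (p + (boxContent '' D).ncard - 1) := by
  have hSfin : (boxContent '' D).Finite := hfin.image _
  have hSne : (boxContent '' D).Nonempty := hne.image _
  obtain ⟨p, hpF, hpmin⟩ := Set.exists_min_image (boxContent '' D) id hSfin hSne
  obtain ⟨q, hqF, hqmax⟩ := Set.exists_max_image (boxContent '' D) id hSfin hSne
  obtain ⟨sp, hsp, hspc⟩ := hpF
  obtain ⟨sq, hsq, hsqc⟩ := hqF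
  have hIcc : boxContent '' D = Set.Icc p q := by
    apply Set.eq_of_subset_of_subset
    · rintro c ⟨x, hx, rfl⟩
      exact ⟨hpmin _ ⟨x, hx, rfl⟩, hqmax _ ⟨x, hx, rfl⟩⟩
    · intro c hc
      simp only [Set.mem_Icc] at hc
      obtain ⟨z, hz, hzc⟩ := contents_convex hconn hsp hsq (c := c) (by omega) (by omega)
      exact ⟨z, hz, hzc⟩
  have hcard : (boxContent '' D).ncard = (q + 1 - p).toNat := by
    rw [hIcc, ← Finset.coe_Icc, Set.ncard_coe_finset, Int.card_Icc]
  have hpq : p ≤ q := by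
    have : boxContent sp ∈ Set.Icc p q := by rw [← hIcc]; exact ⟨sp, hsp, rfl⟩
    simp only [Set.mem_Icc] at this
    omega
  refine ⟨p, ⟨sp, hsp, hspc⟩, ?_⟩
  have ht : (((q + 1 - p).toNat : ℕ) : ℤ) = q + 1 - p := Int.toNat_of_nonneg (by omega)
  rw [hcard, hIcc, ht]
  congr 1
  ring

/-! ### Direction lemmas for outside decompositions -/

section OD

variable {D : Set Box} {P : Set (Set Box)} (hP : IsOutsideDecomposition D P)

include hP

lemma strip_unique {θ θ' : Set Box} (hθ : θ ∈ P) (hθ' : θ' ∈ P) {b : Box} (hb : b ∈ θ)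
    (hb' : b ∈ θ') : θ = θ' := by
  have hbD : b ∈ D := (hP.1 θ hθ).2 hb
  obtain ⟨θ₀, -, hu⟩ := hP.2.1 b hbD
  rw [hu θ ⟨hθ, hb⟩, hu θ' ⟨hθ', hb'⟩]

lemma goesUp_or_goesRight {b : Box} (hb : b ∈ D) : GoesUp D P b ∨ GoesRight D P b := by
  obtain ⟨θ, ⟨hθP, hbθ⟩, -⟩ := hP.2.1 b hb
  by_cases h1 : (b.1 - 1, b.2) ∈ θ
  · exact Or.inl ⟨θ, hθP, hbθ, Or.inl h1⟩
  by_cases h2 : (b.1, b.2 + 1) ∈ θ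
  · exact Or.inr ⟨θ, hθP, hbθ, Or.inl h2⟩
  have hend : IsEndBox θ b := ⟨hbθ, h1, h2⟩
  by_cases h3 : (b.1 - 1, b.2) ∈ D
  · exact Or.inr ⟨θ, hθP, hbθ, Or.inr ⟨hend, h3⟩⟩
  · exact Or.inl ⟨θ, hθP, hbθ, Or.inr ⟨hend, h3⟩⟩

lemma not_goesUp_goesRight {b : Box} :
    ¬(GoesUp D P b ∧ GoesRight D P b) := by
  rintro ⟨⟨θ₁, hθ₁, hb₁, hU⟩, ⟨θ₂, hθ₂, hb₂, hR⟩⟩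
  have hθeq : θ₁ = θ₂ := strip_unique hP hθ₁ hθ₂ hb₁ hb₂
  subst hθeq
  have hBS : IsBorderStrip θ₁ := (hP.1 θ₁ hθ₁).1
  rcases hU with hU | ⟨hE, hND⟩
  · rcases hR with hR | ⟨hE, -⟩
    · have h0 : (b.1 - 1, b.2) = (b.1, b.2 + 1) :=
        content_inj_of_borderStrip hBS hU hR (by simp only [boxContent]; omega)
      rw [Prod.mk.injEq] at h0
      omega
    · exact hE.2.1 hU
  · rcases hR with hR | ⟨-, hD2⟩
    · exact hE.2.2 hR
    · exact hND hD2
end OD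

/-! ### Nested property -/

lemma skew_rect_mem {D : Set Box} (hD : IsSkewShape D) {x y : Box} (hx : x ∈ D) (hy : y ∈ D)
    {r c : ℤ} (h1 : x.1 ≤ r) (h2 : r ≤ y.1) (h3 : x.2 ≤ c) (h4 : c ≤ y.2) : (r, c) ∈ D := by
  obtain ⟨lam, mu, -, rfl⟩ := hD
  exact skew_rect (show (x.1, x.2) ∈ skewCells lam mu by simpa using hx)
    (show (y.1, y.2) ∈ skewCells lam mu by simpa using hy) h1 h2 h3 h4

section OD2

variable {D : Set Box} {P : Set (Set Box)}
variable (hD : IsSkewShape D) (hP : IsOutsideDecomposition D P)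

include hD hP

lemma nested_adjacent {i j : ℤ} (ha : (i, j) ∈ D) (hb : (i + 1, j + 1) ∈ D) :
    (GoesUp D P (i, j) ↔ GoesUp D P (i + 1, j + 1)) := by
  have hX : (i, j + 1) ∈ D :=
    skew_rect_mem hD ha hb le_rfl (by norm_num) (by norm_num) le_rfl
  have hY : (i + 1, j) ∈ D :=
    skew_rect_mem hD ha hb (by norm_num) le_rfl le_rfl (by norm_num)
  have e1 : ((i + 1 : ℤ) - 1, j + 1) = (i, j + 1) := by rw [Prod.mk.injEq]; omega
  -- Claim A : GoesRight (i,j) → ¬ GoesUp (i+1,j+1)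
  have claimA : GoesRight D P (i, j) → ¬GoesUp D P (i + 1, j + 1) := by
    rintro ⟨θa, hθa, haθ, hcasea⟩ ⟨θb, hθb, hbθ, hcaseb⟩
    rw [e1] at hcaseb
    have hXb : (i, j + 1) ∈ θb := by
      rcases hcaseb with h | ⟨-, h2⟩
      · exact h
      · exact absurd hX h2
    rcases hcasea with h | ⟨hE, h2⟩
    · -- (i, j+1) ∈ θa as well
      have h' : (i, j + 1) ∈ θa := h
      have heq : θa = θb := strip_unique hP hθa hθb h' hXb
      subst heq
      have hab : ((i : ℤ), j) = (i + 1, j + 1) :=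
        content_inj_of_borderStrip (hP.1 θa hθa).1 haθ hbθ (by simp only [boxContent]; omega)
      rw [Prod.mk.injEq] at hab
      omega
    · have := hP.2.2.2 θa hθa (i, j) hE
      rcases this with h | h
      · exact h h2
      · exact h hX
  -- Claim B : GoesUp (i,j) → ¬ GoesRight (i+1,j+1)
  have claimB : GoesUp D P (i, j) → ¬GoesRight D P (i + 1, j + 1) := by
    intro hua hrb
    obtain ⟨θ, ⟨hθ, hXθ⟩, -⟩ := hP.2.1 (i, j + 1) hX
    have hnstart : ¬IsStartBox θ (i, j + 1) := by
      intro hs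
      rcases hP.2.2.1 θ hθ (i, j + 1) hs with h | h
      · exact h (by simpa using ha)
      · exact h (by simpa using hb)
    have hmem : ((i : ℤ), j) ∈ θ ∨ ((i : ℤ) + 1, j + 1) ∈ θ := by
      by_contra hcon
      push_neg at hcon
      refine hnstart ⟨hXθ, ?_, ?_⟩
      · simpa using hcon.1
      · simpa using hcon.2
    rcases hmem with h | h
    · -- (i,j) and (i,j+1) in the same strip θ : (i,j) goes right
      have hgr : GoesRight D P (i, j) := ⟨θ, hθ, h, Or.inl (by simpa using hXθ)⟩
      exact not_goesUp_goesRight hP ⟨hua, hgr⟩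
    · have hgu : GoesUp D P (i + 1, j + 1) := ⟨θ, hθ, h, Or.inl (by rw [e1]; exact hXθ)⟩
      exact not_goesUp_goesRight hP ⟨hgu, hrb⟩
  have hbD : ((i : ℤ) + 1, j + 1) ∈ D := hb
  constructor
  · intro h
    rcases goesUp_or_goesRight hP hbD with h2 | h2
    · exact h2
    · exact absurd h2 (claimB h)
  · intro h
    rcases goesUp_or_goesRight hP ha with h2 | h2
    · exact h2
    · exact absurd h (claimA h2)

lemma nested_aux : ∀ t : ℕ, ∀ i j : ℤ, (i, j) ∈ D → (i + t, j + t) ∈ D →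
    (GoesUp D P (i, j) ↔ GoesUp D P (i + t, j + t)) := by
  intro t
  induction t with
  | zero => intro i j h1 h2; norm_num
  | succ t ih =>
      intro i j h1 h2
      have hmid : (i + (t : ℤ), j + (t : ℤ)) ∈ D := by
        refine skew_rect_mem hD h1 h2 (by norm_num) ?_ (by norm_num) ?_ <;> push_cast <;> omega
      have step := nested_adjacent hD hP hmid (by
        have e : ((i + (t : ℤ)) + 1, (j + (t : ℤ)) + 1) = (i + ((t : ℕ) + 1 : ℕ), j + ((t : ℕ) + 1 : ℕ)) := by
          rw [Prod.mk.injEq]; push_cast; omega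
        rw [e]; exact h2)
      have e : ((i + (t : ℤ)) + 1, (j + (t : ℤ)) + 1) = (i + ((t : ℕ) + 1 : ℕ), j + ((t : ℕ) + 1 : ℕ)) := by
        rw [Prod.mk.injEq]; push_cast; omega
      rw [e] at step
      exact (ih i j h1 hmid).trans step

lemma nested {x y : Box} (hx : x ∈ D) (hy : y ∈ D) (hc : boxContent x = boxContent y) :
    (GoesUp D P x ↔ GoesUp D P y) := by
  simp only [boxContent] at hc
  rcases le_or_gt x.1 y.1 with h | h
  · have e : y = (x.1 + ((y.1 - x.1).toNat : ℤ), x.2 + ((y.1 - x.1).toNat : ℤ)) := by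
      rw [Prod.mk.injEq]
      constructor <;> omega
    have := nested_aux hD hP (y.1 - x.1).toNat x.1 x.2 (by simpa using hx) (by rw [← e]; exact hy)
    rw [← e] at this
    simpa using this
  · have e : x = (y.1 + ((x.1 - y.1).toNat : ℤ), y.2 + ((x.1 - y.1).toNat : ℤ)) := by
      rw [Prod.mk.injEq]
      constructor <;> omega
    have := nested_aux hD hP (x.1 - y.1).toNat y.1 y.2 (by simpa using hy) (by rw [← e]; exact hx)
    rw [← e] at this
    exact this.symm.trans (by simpa using Iff.rfl)

end OD2

lemma top_dir {D : Set Box} {P : Set (Set Box)} (hP : IsOutsideDecomposition D P)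
    {c : Box} (hc : c ∈ D) (htop : ∀ x ∈ D, boxContent x ≤ boxContent c) :
    GoesUp D P c ∧ ¬GoesRight D P c := by
  have hA : (c.1 - 1, c.2) ∉ D := by
    intro h
    have := htop _ h
    simp only [boxContent] at this
    omega
  have hR : (c.1, c.2 + 1) ∉ D := by
    intro h
    have := htop _ h
    simp only [boxContent] at this
    omega
  obtain ⟨θ, ⟨hθ, hcθ⟩, -⟩ := hP.2.1 c hc
  have hsub := (hP.1 θ hθ).2
  have hend : IsEndBox θ c := ⟨hcθ, fun h => hA (hsub h), fun h => hR (hsub h)⟩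
  refine ⟨⟨θ, hθ, hcθ, Or.inr ⟨hend, hA⟩⟩, ?_⟩
  rintro ⟨θ', hθ', hcθ', h | ⟨-, h2⟩⟩
  · exact hR ((hP.1 θ' hθ').2 h)
  · exact hA h2

/-! ### Orbits of the successor map -/

lemma prevBox_nextBox' (u : ℤ → Prop) (b : Box) : prevBox u (nextBox u b) = b := by
  have hc : boxContent (nextBox u b) - 1 = boxContent b := by
    rw [content_nextBox]; ring
  by_cases h : u (boxContent b)
  · have h1 : nextBox u b = (b.1 - 1, b.2) := if_pos h
    rw [prevBox, hc, if_pos h, h1, Prod.mk.injEq]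
    constructor <;> dsimp only <;> ring
  · have h1 : nextBox u b = (b.1, b.2 + 1) := if_neg h
    rw [prevBox, hc, if_neg h, h1, Prod.mk.injEq]
    constructor <;> dsimp only <;> ring

lemma prevBox_cases (u : ℤ → Prop) (b : Box) :
    prevBox u b = (b.1 + 1, b.2) ∨ prevBox u b = (b.1, b.2 - 1) := by
  unfold prevBox; split
  · exact Or.inl rfl
  · exact Or.inr rfl

section Orbit

variable (u : ℤ → Prop) (D : Set Box)

def orel : Box → Box → Prop := fun x y => x ∈ D ∧ y ∈ D ∧ y = nextBox u x

def reach : Box → Box → Prop := Relation.ReflTransGen (orel u D)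

def orbit (b : Box) : Set Box := {x | reach u D x b ∨ reach u D b x}

variable {u D}

lemma reach_pathF {x y : Box} (h : reach u D x y) : ∃ k : ℕ, y = pathF u x k := by
  induction h with
  | refl => exact ⟨0, rfl⟩
  | tail _ hstep ih =>
      obtain ⟨k, rfl⟩ := ih
      exact ⟨k + 1, by rw [pathF, hstep.2.2]⟩

lemma reach_content {x y : Box} (h : reach u D x y) : boxContent x ≤ boxContent y := by
  obtain ⟨k, rfl⟩ := reach_pathF h
  rw [content_pathF]
  omega

lemma reach_eq_of_content {x y : Box} (h : reach u D x y)
    (hc : boxContent y ≤ boxContent x) : x = y := by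
  obtain ⟨k, rfl⟩ := reach_pathF h
  rw [content_pathF] at hc
  have : k = 0 := by omega
  rw [this]
  rfl

lemma reach_comp {x y z : Box} (hxy : reach u D x y) :
    reach u D x z → reach u D y z ∨ reach u D z y := by
  induction hxy using Relation.ReflTransGen.head_induction_on with
  | refl => exact fun hxz => Or.inl hxz
  | @head a c hstep htail ih =>
      intro haz
      rcases Relation.ReflTransGen.cases_head haz with rfl | ⟨w', hw', hrest⟩
      · exact Or.inr (Relation.ReflTransGen.head hstep htail)
      · have he : w' = c := by rw [hw'.2.2, hstep.2.2]
        exact ih (he ▸ hrest)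

lemma reach_comp_bwd {x y z : Box} (hyz : reach u D y z) :
    reach u D x z → reach u D x y ∨ reach u D y x := by
  induction hyz with
  | refl => exact fun h => Or.inl h
  | @tail m w hym hstep ih =>
      intro hxw
      rcases Relation.ReflTransGen.cases_tail hxw with rfl | ⟨w', hw', hstep'⟩
      · exact Or.inr (hym.tail hstep)
      · have he : w' = m := by
          have h1 : w = nextBox u w' := hstep'.2.2
          have h2 : w = nextBox u m := hstep.2.2
          have h3 := congrArg (prevBox u) (h1.symm.trans h2)
          rwa [prevBox_nextBox', prevBox_nextBox'] at h3
        exact ih (he ▸ hw')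

def osim (u : ℤ → Prop) (D : Set Box) (x y : Box) : Prop :=
  reach u D x y ∨ reach u D y x

lemma osim_refl (x : Box) : osim u D x x := Or.inl Relation.ReflTransGen.refl

lemma osim_symm {x y : Box} (h : osim u D x y) : osim u D y x := h.symm

lemma osim_trans {x y z : Box} (h1 : osim u D x y) (h2 : osim u D y z) : osim u D x z := by
  rcases h1 with h1 | h1 <;> rcases h2 with h2 | h2
  · exact Or.inl (h1.trans h2)
  · exact reach_comp_bwd h2 h1
  · exact reach_comp h1 h2
  · exact Or.inr (h2.trans h1)

lemma mem_orbit_iff {b x : Box} : x ∈ orbit u D b ↔ osim u D x b := Iff.rfl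

lemma self_mem_orbit (b : Box) : b ∈ orbit u D b := osim_refl b

lemma orbit_eq_of_osim {b b' : Box} (h : osim u D b b') : orbit u D b = orbit u D b' := by
  ext x
  exact ⟨fun hx => osim_trans hx h, fun hx => osim_trans hx (osim_symm h)⟩

lemma orbit_subset {b : Box} (hb : b ∈ D) : orbit u D b ⊆ D := by
  intro x hx
  rcases hx with h | h
  · rcases Relation.ReflTransGen.cases_head h with rfl | ⟨w, hw, -⟩
    · exact hb
    · exact hw.1
  · rcases Relation.ReflTransGen.cases_tail h with rfl | ⟨w, -, hw⟩
    · exact hb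
    · exact hw.2.1

lemma orbit_structure (hfin : D.Finite) {b : Box} (hb : b ∈ D) :
    ∃ s : Box, ∃ M : ℕ, 1 ≤ M ∧ orbit u D b = ribbonSet u s M ∧
      prevBox u s ∉ D ∧ nextBox u (pathF u s (M - 1)) ∉ D := by
  have hsub : orbit u D b ⊆ D := orbit_subset hb
  have hOfin : (orbit u D b).Finite := hfin.subset hsub
  have hOne : (orbit u D b).Nonempty := ⟨b, self_mem_orbit b⟩
  obtain ⟨s, hsS, hsmin⟩ := Set.exists_min_image _ boxContent hOfin hOne
  obtain ⟨e, heS, hemax⟩ := Set.exists_max_image _ boxContent hOfin hOne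
  have hreach_s : ∀ x ∈ orbit u D b, reach u D s x := by
    intro x hx
    have hsim : osim u D s x := osim_trans hsS (osim_symm hx)
    rcases hsim with h | h
    · exact h
    · rw [reach_eq_of_content h (hsmin x hx)]
      exact Relation.ReflTransGen.refl
  have hstep_mem : ∀ x ∈ orbit u D b, nextBox u x ∈ D → nextBox u x ∈ orbit u D b := by
    intro x hx hnD
    have hxD : x ∈ D := hsub hx
    have hstep : orel u D x (nextBox u x) := ⟨hxD, hnD, rfl⟩
    rcases hx with h | h
    · rcases reach_comp (Relation.ReflTransGen.single hstep) h with h2 | h2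
      · exact Or.inl h2
      · exact Or.inr h2
    · exact Or.inr (h.tail hstep)
  set M : ℕ := (boxContent e - boxContent s).toNat + 1 with hM
  have hMZ : (M : ℤ) = boxContent e - boxContent s + 1 := by
    have := hsmin e heS
    rw [hM]
    push_cast
    omega
  have claim2 : ∀ k, k < M → pathF u s k ∈ orbit u D b := by
    intro k
    induction k with
    | zero => exact fun _ => hsS
    | succ k ih =>
        intro hk1
        have hx := ih (by omega)
        have hxD : pathF u s k ∈ D := hsub hx
        have hcx : boxContent (pathF u s k) = boxContent s + k := content_pathF u s k
        have hclt : boxContent (pathF u s k) < boxContent e := by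
          have hkM : (k : ℤ) + 1 < (M : ℤ) := by exact_mod_cast hk1
          omega
        have hxe : reach u D (pathF u s k) e := by
          have hsim : osim u D (pathF u s k) e := osim_trans hx (osim_symm heS)
          rcases hsim with h | h
          · exact h
          · have := reach_content h
            omega
        have hnD : nextBox u (pathF u s k) ∈ D := by
          rcases Relation.ReflTransGen.cases_head hxe with heq | ⟨w, hw, -⟩
          · rw [heq] at hclt
            omega
          · rw [← hw.2.2]
            exact hw.2.1
        exact hstep_mem _ hx hnD
  have claim1 : ∀ x ∈ orbit u D b, ∃ k, k < M ∧ pathF u s k = x := by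
    intro x hx
    obtain ⟨k, rfl⟩ := reach_pathF (hreach_s x hx)
    refine ⟨k, ?_, rfl⟩
    have h1 := content_pathF u s k
    have h2 := hemax _ hx
    omega
  refine ⟨s, M, by omega, ?_, ?_, ?_⟩
  · ext x
    rw [mem_ribbonSet]
    constructor
    · exact fun hx => claim1 x hx
    · rintro ⟨k, hk, rfl⟩
      exact claim2 k hk
  · intro hpD
    have hsD : s ∈ D := hsub hsS
    have hstep : orel u D (prevBox u s) s := ⟨hpD, hsD, (prevBox_nextBox u s).symm⟩
    have hpS : prevBox u s ∈ orbit u D b := by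
      rcases hsS with h | h
      · exact Or.inl (Relation.ReflTransGen.head hstep h)
      · rcases reach_comp_bwd (Relation.ReflTransGen.single hstep) h with h2 | h2
        · exact Or.inr h2
        · exact Or.inl h2
    have := hsmin _ hpS
    have hc : boxContent s = boxContent (prevBox u s) + 1 := by
      conv_lhs => rw [← prevBox_nextBox u s]
      rw [content_nextBox]
    omega
  · intro hnD
    have heM : pathF u s (M - 1) ∈ orbit u D b := claim2 (M - 1) (by omega)
    have hnS := hstep_mem _ heM hnD
    have := hemax _ hnS
    have h1 := content_nextBox u (pathF u s (M - 1))
    have h2 := content_pathF u s (M - 1)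
    have h3 : ∃ k, k < M ∧ pathF u s k = nextBox u (pathF u s (M - 1)) := claim1 _ hnS
    obtain ⟨k, hk, hke⟩ := h3
    have h4 := content_pathF u s k
    rw [hke] at h4
    have h5 : ((M : ℤ) - 1) = ((M - 1 : ℕ) : ℤ) := by omega
    omega

end Orbit

/-! ### Helpers for uniqueness and injectivity -/

lemma contents_boxTranslate (v : Box) (B : Set Box) {c : ℤ} :
    c ∈ boxContent '' boxTranslate v B ↔ c - (v.2 - v.1) ∈ boxContent '' B := by
  constructor
  · rintro ⟨x, hx, rfl⟩
    rw [mem_boxTranslate] at hx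
    exact ⟨_, hx, by simp only [boxContent]; omega⟩
  · rintro ⟨x, hx, hxc⟩
    refine ⟨(x.1 + v.1, x.2 + v.2), mem_boxTranslate' hx, ?_⟩
    simp only [boxContent] at hxc ⊢
    omega

lemma stripGoesUpAt_translate {v : Box} {B : Set Box} {i : ℤ} :
    StripGoesUpAt (boxTranslate v B) (i + (v.2 - v.1)) ↔ StripGoesUpAt B i := by
  constructor
  · rintro ⟨b, hb, hbc, habove⟩
    rw [mem_boxTranslate] at hb habove
    refine ⟨(b.1 - v.1, b.2 - v.2), hb, ?_, ?_⟩
    · simp only [boxContent] at hbc ⊢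
      omega
    · convert habove using 2 <;> dsimp only <;> ring
  · rintro ⟨b, hb, hbc, habove⟩
    refine ⟨(b.1 + v.1, b.2 + v.2), mem_boxTranslate' hb, ?_, ?_⟩
    · simp only [boxContent] at hbc ⊢
      omega
    · have := mem_boxTranslate' (v := v) habove
      convert this using 2 <;> dsimp only <;> ring

lemma cutting_strip_up_iff {D : Set Box} {P : Set (Set Box)} {T : Set Box}
    (hP : IsOutsideDecomposition D P) (hT : IsCuttingStripOf D P T)
    {i : ℤ} (hi : i ∈ boxContent '' D) (hi1 : i + 1 ∈ boxContent '' D)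
    {c : Box} (hc : c ∈ D) (hci : boxContent c = i) :
    (StripGoesUpAt T i ↔ GoesUp D P c) := by
  obtain ⟨b, hbT, hbc⟩ : ∃ b ∈ T, boxContent b = i := by
    have : i ∈ boxContent '' T := by rw [hT.2.1]; exact hi
    obtain ⟨b, hb, hbc⟩ := this
    exact ⟨b, hb, hbc⟩
  constructor
  · rintro ⟨b', hb'T, hb'c, habove⟩
    exact (hT.2.2 b' hb'T c hc (by omega)).1 habove
  · intro hup
    have hnr : ¬GoesRight D P c := fun hr => not_goesUp_goesRight hP ⟨hup, hr⟩
    have : i + 1 ∈ boxContent '' T := by rw [hT.2.1]; exact hi1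
    obtain ⟨y, hyT, hyc⟩ := this
    rcases ribbon_succ hT.1 hbT hyT (by omega) with h | h
    · exact ⟨b, hbT, hbc, by rw [← h]; exact hyT⟩
    · exfalso
      refine hnr ((hT.2.2 b hbT c hc (by omega)).2 ?_)
      rw [← h]
      exact hyT

/-- Propagation: if directions transfer from `P` to `P'`, strips of `P` are contained in
the corresponding strips of `P'`. -/
lemma propagate {D : Set Box} {P P' : Set (Set Box)}
    (hP : IsOutsideDecomposition D P) (hP' : IsOutsideDecomposition D P')
    (hkey : ∀ x ∈ D, (GoesUp D P x → GoesUp D P' x) ∧ (GoesRight D P x → GoesRight D P' x))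
    {θ θ' : Set Box} (hθ : θ ∈ P) (hθ' : θ' ∈ P') {b₀ : Box} (hb₀ : b₀ ∈ θ)
    (hb₀' : b₀ ∈ θ') : θ ⊆ θ' := by
  have hθD : θ ⊆ D := (hP.1 θ hθ).2
  have hstep : ∀ x y : Box, x ∈ θ → y ∈ θ → boxAdj x y → x ∈ θ' → y ∈ θ' := by
    intro x y hx hy hadj hx'
    rcases hadj with ⟨h1, h2 | h2⟩ | ⟨h1, h2 | h2⟩
    · -- y to the left of x : x = (y.1, y.2 + 1)
      have hgr : GoesRight D P y := by
        refine ⟨θ, hθ, hy, Or.inl ?_⟩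
        have : (y.1, y.2 + 1) = x := by rw [Prod.mk.injEq]; omega
        rw [this]; exact hx
      obtain ⟨θ'', hθ'', hyθ'', hcase⟩ := (hkey y (hθD hy)).2 hgr
      rcases hcase with h | ⟨hend, habove⟩
      · have hxθ'' : x ∈ θ'' := by
          have : (y.1, y.2 + 1) = x := by rw [Prod.mk.injEq]; omega
          rw [← this]; exact h
        rw [← strip_unique hP' hθ'' hθ' hxθ'' hx']
        exact hyθ''
      · exfalso
        rcases hP'.2.2.2 θ'' hθ'' y hend with h | h
        · exact h habove
        · refine h ?_
          have : (y.1, y.2 + 1) = x := by rw [Prod.mk.injEq]; omega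
          rw [this]; exact hθD hx
    · -- y to the right of x
      have hgr : GoesRight D P x := by
        refine ⟨θ, hθ, hx, Or.inl ?_⟩
        have : (x.1, x.2 + 1) = y := by rw [Prod.mk.injEq]; omega
        rw [this]; exact hy
      obtain ⟨θ'', hθ'', hxθ'', hcase⟩ := (hkey x (hθD hx)).2 hgr
      have he : θ'' = θ' := strip_unique hP' hθ'' hθ' hxθ'' hx'
      subst he
      rcases hcase with h | ⟨hend, habove⟩
      · have : (x.1, x.2 + 1) = y := by rw [Prod.mk.injEq]; omega
        rw [← this]; exact h
      · exfalso
        rcases hP'.2.2.2 θ'' hθ'' x hend with h | h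
        · exact h habove
        · refine h ?_
          have : (x.1, x.2 + 1) = y := by rw [Prod.mk.injEq]; omega
          rw [this]; exact hθD hy
    · -- y above x
      have hgu : GoesUp D P x := by
        refine ⟨θ, hθ, hx, Or.inl ?_⟩
        have : (x.1 - 1, x.2) = y := by rw [Prod.mk.injEq]; omega
        rw [this]; exact hy
      obtain ⟨θ'', hθ'', hxθ'', hcase⟩ := (hkey x (hθD hx)).1 hgu
      have he : θ'' = θ' := strip_unique hP' hθ'' hθ' hxθ'' hx'
      subst he
      rcases hcase with h | ⟨hend, hnA⟩
      · have : (x.1 - 1, x.2) = y := by rw [Prod.mk.injEq]; omega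
        rw [← this]; exact h
      · exfalso
        refine hnA ?_
        have : (x.1 - 1, x.2) = y := by rw [Prod.mk.injEq]; omega
        rw [this]; exact hθD hy
    · -- y below x
      have hgu : GoesUp D P y := by
        refine ⟨θ, hθ, hy, Or.inl ?_⟩
        have : (y.1 - 1, y.2) = x := by rw [Prod.mk.injEq]; omega
        rw [this]; exact hx
      obtain ⟨θ'', hθ'', hyθ'', hcase⟩ := (hkey y (hθD hy)).1 hgu
      rcases hcase with h | ⟨hend, hnA⟩
      · have hxθ'' : x ∈ θ'' := by
          have : (y.1 - 1, y.2) = x := by rw [Prod.mk.injEq]; omega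
          rw [← this]; exact h
        rw [← strip_unique hP' hθ'' hθ' hxθ'' hx']
        exact hyθ''
      · exfalso
        refine hnA ?_
        have : (y.1 - 1, y.2) = x := by rw [Prod.mk.injEq]; omega
        rw [this]; exact hθD hx
  intro x hx
  have hconn := (hP.1 θ hθ).1.2.2.1
  have hpath := hconn b₀ hb₀ x hx
  clear hx
  induction hpath with
  | refl => exact hb₀'
  | tail hab hstep2 ih => exact hstep _ _ hstep2.1 hstep2.2.1 hstep2.2.2 ih

/-! ### The outside decomposition determined by a direction function -/

def orbitOD (u : ℤ → Prop) (D : Set Box) : Set (Set Box) := {θ | ∃ b ∈ D, θ = orbit u D b}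

section OrbitOD

variable {u : ℤ → Prop} {D : Set Box} (hfin : D.Finite)

include hfin

lemma orbitOD_isOD : IsOutsideDecomposition D (orbitOD u D) := by
  refine ⟨?_, ?_, ?_, ?_⟩
  · rintro θ ⟨b, hb, rfl⟩
    obtain ⟨s, M, hM, heq, -, -⟩ := orbit_structure hfin hb
    exact ⟨heq ▸ isBorderStrip_ribbonSet u s M hM, orbit_subset hb⟩
  · intro b hb
    refine ⟨orbit u D b, ⟨⟨b, hb, rfl⟩, self_mem_orbit b⟩, ?_⟩
    rintro θ ⟨⟨b', hb', rfl⟩, hbθ⟩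
    exact (orbit_eq_of_osim hbθ).symm
  · rintro θ ⟨b, hb, rfl⟩ x hx
    obtain ⟨s, M, hM, heq, hprev, -⟩ := orbit_structure hfin hb
    rw [heq] at hx
    have hxs : x = s := ribbonSet_isStartBox u s M hM hx
    subst hxs
    rcases prevBox_cases u x with h | h
    · right; rw [← h]; exact hprev
    · left; rw [← h]; exact hprev
  · rintro θ ⟨b, hb, rfl⟩ x hx
    obtain ⟨s, M, hM, heq, -, hnext⟩ := orbit_structure hfin hb
    rw [heq] at hx
    have hxe : x = pathF u s (M - 1) := ribbonSet_isEndBox u s M hM hx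
    rcases nextBox_cases u (pathF u s (M - 1)) with h | h
    · left
      rw [hxe, ← h]
      exact hnext
    · right
      rw [hxe, ← h]
      exact hnext

lemma orbit_goesUp {c : Box} (hc : c ∈ D) (hu : u (boxContent c)) :
    GoesUp D (orbitOD u D) c := by
  have hθP : orbit u D c ∈ orbitOD u D := ⟨c, hc, rfl⟩
  have hnb : nextBox u c = (c.1 - 1, c.2) := if_pos hu
  by_cases hnD : (c.1 - 1, c.2) ∈ D
  · refine ⟨orbit u D c, hθP, self_mem_orbit c, Or.inl ?_⟩
    rw [← hnb]
    exact Or.inr (Relation.ReflTransGen.single ⟨hc, by rw [hnb]; exact hnD, rfl⟩)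
  · refine ⟨orbit u D c, hθP, self_mem_orbit c, Or.inr ⟨⟨self_mem_orbit c, ?_, ?_⟩, hnD⟩⟩
    · exact fun hmem => hnD (orbit_subset hc hmem)
    · intro hmem
      rcases hmem with h | h
      · have h1 := reach_content h
        simp only [boxContent] at h1
        omega
      · rcases Relation.ReflTransGen.cases_head h with heq | ⟨w, hw, -⟩
        · have := congrArg Prod.snd heq
          simp only at this
          omega
        · refine hnD ?_
          rw [← hnb, ← hw.2.2]
          exact hw.2.1

lemma orbit_goesRight {c : Box} (hc : c ∈ D) (hnu : ¬u (boxContent c))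
    (hup : (c.1 - 1, c.2) ∈ D ∨ (c.1, c.2 + 1) ∈ D) :
    GoesRight D (orbitOD u D) c := by
  have hθP : orbit u D c ∈ orbitOD u D := ⟨c, hc, rfl⟩
  have hnb : nextBox u c = (c.1, c.2 + 1) := if_neg hnu
  by_cases hnD : (c.1, c.2 + 1) ∈ D
  · refine ⟨orbit u D c, hθP, self_mem_orbit c, Or.inl ?_⟩
    rw [← hnb]
    exact Or.inr (Relation.ReflTransGen.single ⟨hc, by rw [hnb]; exact hnD, rfl⟩)
  · have haD : (c.1 - 1, c.2) ∈ D := by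
      rcases hup with h | h
      · exact h
      · exact absurd h hnD
    refine ⟨orbit u D c, hθP, self_mem_orbit c, Or.inr ⟨⟨self_mem_orbit c, ?_, ?_⟩, haD⟩⟩
    · intro hmem
      rcases hmem with h | h
      · have h1 := reach_content h
        simp only [boxContent] at h1
        omega
      · rcases Relation.ReflTransGen.cases_head h with heq | ⟨w, hw, -⟩
        · have := congrArg Prod.fst heq
          simp only at this
          omega
        · refine hnD ?_
          rw [← hnb, ← hw.2.2]
          exact hw.2.1
    · exact fun hmem => hnD (orbit_subset hc hmem)

end OrbitOD

/-! ### Main parts -/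

lemma part1 {D : Set Box} (hD : IsSkewShape D) (hne : D.Nonempty) (hconn : EdgewiseConnected D)
    {P : Set (Set Box)} (hP : IsOutsideDecomposition D P) (d : ℕ)
    (hd : (boxContent '' D).ncard = d) :
    ∃ T : Set Box, IsCuttingStripOf D P T ∧ T.ncard = d := by
  classical
  have hfin := skewShape_finite hD
  obtain ⟨p0, ⟨s0, hs0, hs0c⟩, hIcc⟩ := contents_eq_Icc hfin hne hconn
  rw [hd] at hIcc
  have hd1 : 1 ≤ d := by
    have h1 := (Set.ncard_pos (hfin.image boxContent)).2 (hne.image _)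
    omega
  set u : ℤ → Prop := fun i => ∀ c ∈ D, boxContent c = i → GoesUp D P c with hu
  refine ⟨ribbonSet u s0 d, ⟨isBorderStrip_ribbonSet u s0 d hd1, ?_, ?_⟩, ribbonSet_ncard u s0 d⟩
  · rw [ribbonSet_contents u s0 d hd1, hIcc, hs0c]
  · intro b hbT c hc hcc
    rw [mem_ribbonSet] at hbT
    obtain ⟨k, hk, rfl⟩ := hbT
    have hcb : boxContent (pathF u s0 k) = p0 + k := by rw [content_pathF, hs0c]
    constructor
    · intro habove
      have habove' := habove
      rw [mem_ribbonSet] at habove'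
      obtain ⟨l, hl, hle⟩ := habove'
      have hlc : l = k + 1 := by
        have h2 := content_pathF u s0 l
        have h4 := hs0c
        rw [hle] at h2
        simp only [boxContent] at h2 hcb h4
        omega
      subst hlc
      have hup : u (boxContent (pathF u s0 k)) := by
        by_contra hnu
        have h3 : pathF u s0 (k + 1) = ((pathF u s0 k).1, (pathF u s0 k).2 + 1) := by
          rw [pathF, nextBox, if_neg hnu]
        rw [h3, Prod.mk.injEq] at hle
        omega
      exact hup c hc hcc
    · intro hright
      have hright' := hright
      rw [mem_ribbonSet] at hright'
      obtain ⟨l, hl, hle⟩ := hright'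
      have hlc : l = k + 1 := by
        have h2 := content_pathF u s0 l
        have h4 := hs0c
        rw [hle] at h2
        simp only [boxContent] at h2 hcb h4
        omega
      subst hlc
      have hnu : ¬u (boxContent (pathF u s0 k)) := by
        intro hu2
        have h3 : pathF u s0 (k + 1) = ((pathF u s0 k).1 - 1, (pathF u s0 k).2) := by
          rw [pathF, nextBox, if_pos hu2]
        rw [h3, Prod.mk.injEq] at hle
        omega
      obtain ⟨c₀, hc₀, hc₀c, hc₀nu⟩ :
          ∃ c₀ ∈ D, boxContent c₀ = boxContent (pathF u s0 k) ∧ ¬GoesUp D P c₀ := by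
        by_contra hall
        push_neg at hall
        exact hnu (fun c' hc' hcc' => hall c' hc' hcc')
      rcases goesUp_or_goesRight hP hc with h | h
      · exfalso
        exact hc₀nu ((nested hD hP hc hc₀ (by omega)).1 h)
      · exact h

lemma part4 {D : Set Box} (hD : IsSkewShape D) (hne : D.Nonempty) (hconn : EdgewiseConnected D)
    (d : ℕ) (hd : (boxContent '' D).ncard = d) (T : Set Box) (hT : IsBorderStrip T)
    (hTd : T.ncard = d) :
    ∃ P : Set (Set Box), IsOutsideDecomposition D P ∧
      ∃ v : Box, IsCuttingStripOf D P (boxTranslate v T) := by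
  classical
  have hfin := skewShape_finite hD
  obtain ⟨p0, ⟨s0, hs0, hs0c⟩, hIcc⟩ := contents_eq_Icc hfin hne hconn
  rw [hd] at hIcc
  have hd1 : 1 ≤ d := by
    have h1 := (Set.ncard_pos (hfin.image boxContent)).2 (hne.image _)
    omega
  have hTfin : T.Finite := by
    by_contra h
    have := Set.Infinite.ncard (h : T.Infinite)
    omega
  have hTinj : Set.InjOn boxContent T := fun x hx y hy h => by
    by_contra hne2
    exact hne2 (content_inj_of_borderStrip hT hx hy h)
  have hTcard : (boxContent '' T).ncard = d := by
    rw [Set.ncard_image_of_injOn hTinj, hTd]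
  obtain ⟨a, ⟨t0, ht0, ht0c⟩, hTIcc⟩ := contents_eq_Icc hTfin hT.1 hT.2.2.1
  rw [hTcard] at hTIcc
  set v : Box := (0, p0 - a) with hv
  set T' : Set Box := boxTranslate v T with hT'
  have hT'BS : IsBorderStrip T' := isBorderStrip_translate hT
  have hT'cont : boxContent '' T' = Set.Icc p0 (p0 + d - 1) := by
    ext c
    rw [hT', contents_boxTranslate, hTIcc]
    simp only [Set.mem_Icc, hv]
    constructor <;> intro h <;> (constructor <;> omega)
  have hcontDT : boxContent '' T' = boxContent '' D := by rw [hT'cont, hIcc]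
  set u : ℤ → Prop := StripGoesUpAt T' with hu
  set P : Set (Set Box) := orbitOD u D with hP
  have hPod : IsOutsideDecomposition D P := orbitOD_isOD hfin
  refine ⟨P, hPod, v, hT'BS, hcontDT, ?_⟩
  intro b hbT c hc hcc
  constructor
  · intro habove
    refine orbit_goesUp hfin hc ?_
    rw [hcc, hu]
    exact ⟨b, hbT, rfl, habove⟩
  · intro hright
    have hcr : boxContent (b.1, b.2 + 1) = boxContent b + 1 := by
      simp only [boxContent]; omega
    have hnu : ¬u (boxContent c) := by
      rw [hcc, hu]
      rintro ⟨b', hb', hb'c, habove'⟩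
      have hbb : b' = b := content_inj_of_borderStrip hT'BS hb' hbT hb'c
      subst hbb
      have : (b'.1 - 1, b'.2) = (b'.1, b'.2 + 1) := by
        refine content_inj_of_borderStrip hT'BS habove' hright ?_
        simp only [boxContent]; omega
      rw [Prod.mk.injEq] at this
      omega
    have hsucc : ∃ e ∈ D, boxContent e = boxContent c + 1 := by
      have h1 : boxContent b + 1 ∈ boxContent '' T' := ⟨_, hright, hcr⟩
      rw [hcontDT] at h1
      obtain ⟨e, he, hec⟩ := h1
      exact ⟨e, he, by omega⟩
    obtain ⟨e, he, hec⟩ := hsucc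
    exact orbit_goesRight hfin hc hnu (skew_succ_mem hD hc he hec)

lemma part2 {D : Set Box} (hD : IsSkewShape D) (hne : D.Nonempty) (hconn : EdgewiseConnected D)
    {P : Set (Set Box)} (hP : IsOutsideDecomposition D P) {T T' : Set Box}
    (hT : IsCuttingStripOf D P T) (hT' : IsCuttingStripOf D P T') :
    ∃ v : Box, T' = boxTranslate v T := by
  classical
  have hfin := skewShape_finite hD
  obtain ⟨p0, ⟨s0, hs0, hs0c⟩, hIcc⟩ := contents_eq_Icc hfin hne hconn
  set d : ℕ := (boxContent '' D).ncard with hd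
  have hd1 : 1 ≤ d := by
    have h1 := (Set.ncard_pos (hfin.image boxContent)).2 (hne.image _)
    omega
  obtain ⟨s, hsT, hsc⟩ : ∃ s ∈ T, boxContent s = p0 := by
    have : p0 ∈ boxContent '' T := by
      rw [hT.2.1, hIcc]
      simp only [Set.mem_Icc]
      omega
    obtain ⟨s, hs, hsc⟩ := this
    exact ⟨s, hs, hsc⟩
  obtain ⟨s', hsT', hsc'⟩ : ∃ s' ∈ T', boxContent s' = p0 := by
    have : p0 ∈ boxContent '' T' := by
      rw [hT'.2.1, hIcc]
      simp only [Set.mem_Icc]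
      omega
    obtain ⟨s', hs', hsc'⟩ := this
    exact ⟨s', hs', hsc'⟩
  have hTnorm : T = ribbonSet (StripGoesUpAt T) s d :=
    ribbon_eq_ribbonSet hT.1 hsT hd1 (by rw [hT.2.1, hIcc, hsc])
  have hT'norm : T' = ribbonSet (StripGoesUpAt T') s' d :=
    ribbon_eq_ribbonSet hT'.1 hsT' hd1 (by rw [hT'.2.1, hIcc, hsc'])
  have hagree : ∀ k : ℕ, k + 1 < d → (StripGoesUpAt T (p0 + k) ↔ StripGoesUpAt T' (p0 + k)) := by
    intro k hk
    have hkd : (k : ℤ) + 1 < (d : ℤ) := by exact_mod_cast hk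
    have hi : p0 + (k : ℤ) ∈ boxContent '' D := by
      rw [hIcc]
      simp only [Set.mem_Icc]
      omega
    have hi1 : p0 + (k : ℤ) + 1 ∈ boxContent '' D := by
      rw [hIcc]
      simp only [Set.mem_Icc]
      omega
    obtain ⟨c, hc, hcc⟩ := id hi
    rw [cutting_strip_up_iff hP hT hi hi1 hc hcc]
    exact (cutting_strip_up_iff hP hT' hi hi1 hc hcc).symm
  have hshift : s'.2 - s'.1 = s.2 - s.1 := by
    simp only [boxContent] at hsc hsc'
    omega
  have hpath : ∀ k, k < d →
      pathF (StripGoesUpAt T') s' k =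
        ((pathF (StripGoesUpAt T) s k).1 + (s'.1 - s.1),
         (pathF (StripGoesUpAt T) s k).2 + (s'.2 - s.2)) := by
    intro k
    induction k with
    | zero =>
        intro _
        rw [Prod.mk.injEq]
        constructor <;> (dsimp only [pathF]; ring)
    | succ k ih =>
        intro hk1
        have hx := ih (by omega)
        have hcx : boxContent (pathF (StripGoesUpAt T) s k) = p0 + k := by
          rw [content_pathF, hsc]
        have hcx' : boxContent (pathF (StripGoesUpAt T') s' k) = p0 + k := by
          rw [content_pathF, hsc']
        have hag := hagree k hk1
        rw [pathF, pathF, nextBox, nextBox, hcx, hcx']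
        by_cases h : StripGoesUpAt T (p0 + k)
        · rw [if_pos h, if_pos (hag.1 h), hx, Prod.mk.injEq]
          constructor <;> (dsimp only; try ring)
        · rw [if_neg h, if_neg (fun h2 => h (hag.2 h2)), hx, Prod.mk.injEq]
          constructor <;> (dsimp only; try ring)
  refine ⟨(s'.1 - s.1, s'.2 - s.2), ?_⟩
  ext x
  rw [mem_boxTranslate, hTnorm, hT'norm, mem_ribbonSet, mem_ribbonSet]
  constructor
  · rintro ⟨k, hk, rfl⟩
    refine ⟨k, hk, ?_⟩
    rw [hpath k hk, Prod.mk.injEq]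
    constructor <;> (dsimp only; ring)
  · rintro ⟨k, hk, he⟩
    refine ⟨k, hk, ?_⟩
    rw [hpath k hk]
    rw [Prod.mk.injEq]
    have h1 := congrArg Prod.fst he
    have h2 := congrArg Prod.snd he
    dsimp only at h1 h2 ⊢
    omega

lemma part3 {D : Set Box} (hD : IsSkewShape D) (hne : D.Nonempty) (hconn : EdgewiseConnected D)
    {P P' : Set (Set Box)} (hP : IsOutsideDecomposition D P) (hP' : IsOutsideDecomposition D P')
    {T T' : Set Box} (hT : IsCuttingStripOf D P T) (hT' : IsCuttingStripOf D P' T')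
    {v : Box} (hv : T' = boxTranslate v T) : P = P' := by
  classical
  have hfin := skewShape_finite hD
  obtain ⟨p0, ⟨s0, hs0, hs0c⟩, hIcc⟩ := contents_eq_Icc hfin hne hconn
  set d : ℕ := (boxContent '' D).ncard with hd
  have hd1 : 1 ≤ d := by
    have h1 := (Set.ncard_pos (hfin.image boxContent)).2 (hne.image _)
    omega
  have hδ : v.2 - v.1 = 0 := by
    have h1 : p0 + (v.2 - v.1) ∈ boxContent '' T' := by
      rw [hv, contents_boxTranslate]
      have : p0 + (v.2 - v.1) - (v.2 - v.1) = p0 := by ring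
      rw [this, hT.2.1, hIcc]
      simp only [Set.mem_Icc]
      omega
    have h2 : p0 - (v.2 - v.1) ∈ boxContent '' T := by
      rw [← contents_boxTranslate, ← hv, hT'.2.1, hIcc]
      simp only [Set.mem_Icc]
      omega
    rw [hT'.2.1, hIcc] at h1
    rw [hT.2.1, hIcc] at h2
    simp only [Set.mem_Icc] at h1 h2
    omega
  have hupiff : ∀ i : ℤ, (StripGoesUpAt T' i ↔ StripGoesUpAt T i) := by
    intro i
    have h := stripGoesUpAt_translate (v := v) (B := T) (i := i)
    rw [hδ, add_zero, ← hv] at h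
    exact h
  have hkey : ∀ x ∈ D, (GoesUp D P x ↔ GoesUp D P' x) := by
    intro x hx
    have hcx : boxContent x ∈ Set.Icc p0 (p0 + (d : ℤ) - 1) := by
      rw [← hIcc]
      exact ⟨x, hx, rfl⟩
    simp only [Set.mem_Icc] at hcx
    by_cases hq : boxContent x + 1 ≤ p0 + (d : ℤ) - 1
    · have hi : boxContent x ∈ boxContent '' D := ⟨x, hx, rfl⟩
      have hi1 : boxContent x + 1 ∈ boxContent '' D := by
        rw [hIcc]
        simp only [Set.mem_Icc]
        omega
      rw [← cutting_strip_up_iff hP hT hi hi1 hx rfl,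
        ← cutting_strip_up_iff hP' hT' hi hi1 hx rfl]
      exact (hupiff (boxContent x)).symm
    · have htop : ∀ z ∈ D, boxContent z ≤ boxContent x := by
        intro z hz
        have : boxContent z ∈ Set.Icc p0 (p0 + (d : ℤ) - 1) := by
          rw [← hIcc]
          exact ⟨z, hz, rfl⟩
        simp only [Set.mem_Icc] at this
        omega
      constructor
      · intro _
        exact (top_dir hP' hx htop).1
      · intro _
        exact (top_dir hP hx htop).1
  have hkey2 : ∀ x ∈ D, (GoesUp D P x → GoesUp D P' x) ∧
      (GoesRight D P x → GoesRight D P' x) := by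
    intro x hx
    refine ⟨(hkey x hx).1, ?_⟩
    intro hr
    rcases goesUp_or_goesRight hP' hx with h | h
    · exfalso
      exact not_goesUp_goesRight hP ⟨(hkey x hx).2 h, hr⟩
    · exact h
  have hkey2' : ∀ x ∈ D, (GoesUp D P' x → GoesUp D P x) ∧
      (GoesRight D P' x → GoesRight D P x) := by
    intro x hx
    refine ⟨(hkey x hx).2, ?_⟩
    intro hr
    rcases goesUp_or_goesRight hP hx with h | h
    · exfalso
      exact not_goesUp_goesRight hP' ⟨(hkey x hx).1 h, hr⟩
    · exact h
  have hsub : ∀ {Q Q' : Set (Set Box)}, IsOutsideDecomposition D Q →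
      IsOutsideDecomposition D Q' →
      (∀ x ∈ D, (GoesUp D Q x → GoesUp D Q' x) ∧ (GoesRight D Q x → GoesRight D Q' x)) →
      (∀ x ∈ D, (GoesUp D Q' x → GoesUp D Q x) ∧ (GoesRight D Q' x → GoesRight D Q x)) →
      Q ⊆ Q' := by
    intro Q Q' hQ hQ' hk hk' θ hθ
    obtain ⟨b₀, hb₀⟩ := (hQ.1 θ hθ).1.1
    have hb₀D : b₀ ∈ D := (hQ.1 θ hθ).2 hb₀
    obtain ⟨θ', ⟨hθ', hb₀'⟩, -⟩ := hQ'.2.1 b₀ hb₀D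
    have h1 : θ ⊆ θ' := propagate hQ hQ' hk hθ hθ' hb₀ hb₀'
    have h2 : θ' ⊆ θ := propagate hQ' hQ hk' hθ' hθ hb₀' hb₀
    have : θ = θ' := Set.Subset.antisymm h1 h2
    rw [this]
    exact hθ'
  exact Set.Subset.antisymm (hsub hP hP' hkey2 hkey2') (hsub hP' hP hkey2' hkey2)

end CSAux
/-- For an edgewise connected skew diagram `D` with `d` diagonals, the map
sending an outside decomposition `Π` to its cutting strip `φ(Π)` is a bijection between
outside decompositions of `D` and border strips with `d` boxes, considered up to
translation: every outside decomposition has a cutting strip (with `d` boxes), unique up to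
translation; outside decompositions with translation-equivalent cutting strips coincide; and
every border strip with `d` boxes is, up to translation, the cutting strip of some outside
decomposition. -/
theorem cuttingStrip_bijection
    (D : Set Box) (hD : IsSkewShape D) (hne : D.Nonempty) (hconn : EdgewiseConnected D)
    (d : ℕ) (hd : (boxContent '' D).ncard = d) :
    (∀ P : Set (Set Box), IsOutsideDecomposition D P →
        ∃ T : Set Box, IsCuttingStripOf D P T ∧ T.ncard = d) ∧
    (∀ (P : Set (Set Box)) (T T' : Set Box), IsOutsideDecomposition D P →
        IsCuttingStripOf D P T → IsCuttingStripOf D P T' →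
        ∃ v : Box, T' = boxTranslate v T) ∧
    (∀ (P P' : Set (Set Box)) (T T' : Set Box),
        IsOutsideDecomposition D P → IsOutsideDecomposition D P' →
        IsCuttingStripOf D P T → IsCuttingStripOf D P' T' →
        (∃ v : Box, T' = boxTranslate v T) → P = P') ∧
    (∀ T : Set Box, IsBorderStrip T → T.ncard = d →
        ∃ P : Set (Set Box), IsOutsideDecomposition D P ∧
          ∃ v : Box, IsCuttingStripOf D P (boxTranslate v T)) := by
  refine ⟨?_, ?_, ?_, ?_⟩
  · intro P hPod
    exact CSAux.part1 hD hne hconn hPod d hd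
  · intro P T T' hPod hT hT'
    exact CSAux.part2 hD hne hconn hPod hT hT'
  · rintro P P' T T' hPod hPod' hT hT' ⟨v, hv⟩
    exact CSAux.part3 hD hne hconn hPod hPod' hT hT' hv
  · intro T hT hTd
    exact CSAux.part4 hD hne hconn d hd T hT hTd
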